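/- arXiv:2010.08714 — 3 statements merged into one kernel-verified Lean document; each statement's English description precedes it below -/
import Mathlib

section
/- Let u₀ ∈ H^{3,3}(ℝ). Then for every k ∈ Σ \ {0}, the scattering coefficients satisfy the determinant relation a(k) · conj(a(conj(k))) + b(k) · conj(b(conj(k))) = 1. In particular, |a(k)|² + |b(k)|² = 1 for every nonzero k ∈ ℝ, and |a(k)|² − |b(k)|² = 1 for every nonzero k ∈ iℝ. -/
open MeasureTheory Complex Set

noncomputable section

def MemHms (m s : ℕ) (u : ℝ → ℂ) : Prop :=
  ∀ j ≤ m, MemLp (fun x : ℝ => ((1 + x ^ 2) ^ ((s : ℝ) / 2) : ℝ) • iteratedDeriv j u x) 2 volume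

def phi (u₀ : ℝ → ℂ) (x : ℝ) : ℝ := ∫ s in Iio x, ‖deriv u₀ s‖ ^ 2

def qf (u₀ : ℝ → ℂ) (x : ℝ) : ℂ :=
  (starRingEnd ℂ) (deriv u₀ x) * Complex.exp (Complex.I * (phi u₀ x : ℝ))

def SigmaSet : Set ℂ := {k : ℂ | (k ^ 2).im = 0}

def SolPlus (u₀ : ℝ → ℂ) (k : ℂ) (f g : ℝ → ℂ) : Prop :=
  Continuous f ∧ Continuous g ∧
  (∃ C : ℝ, ∀ x : ℝ, ‖f x‖ ≤ C ∧ ‖g x‖ ≤ C) ∧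
  ∀ x : ℝ,
    f x = 1 - k * (∫ y in Ioi x, (starRingEnd ℂ) (qf u₀ y) * g y)
            - (Complex.I / 2) * (∫ y in Ioi x, (‖qf u₀ y‖ : ℂ) ^ 2 * f y) ∧
    g x = k * (∫ y in Ioi x,
              Complex.exp (2 * Complex.I * k ^ 2 * ((x - y : ℝ) : ℂ)) * qf u₀ y * f y)
            + (Complex.I / 2) * (∫ y in Ioi x,
              Complex.exp (2 * Complex.I * k ^ 2 * ((x - y : ℝ) : ℂ))
                * (‖qf u₀ y‖ : ℂ) ^ 2 * g y)

def SolMinus (u₀ : ℝ → ℂ) (k : ℂ) (f g : ℝ → ℂ) : Prop :=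
  Continuous f ∧ Continuous g ∧
  (∃ C : ℝ, ∀ x : ℝ, ‖f x‖ ≤ C ∧ ‖g x‖ ≤ C) ∧
  ∀ x : ℝ,
    f x = 1 - k * (-∫ y in Iio x, (starRingEnd ℂ) (qf u₀ y) * g y)
            - (Complex.I / 2) * (-∫ y in Iio x, (‖qf u₀ y‖ : ℂ) ^ 2 * f y) ∧
    g x = k * (-∫ y in Iio x,
              Complex.exp (2 * Complex.I * k ^ 2 * ((x - y : ℝ) : ℂ)) * qf u₀ y * f y)
            + (Complex.I / 2) * (-∫ y in Iio x,
              Complex.exp (2 * Complex.I * k ^ 2 * ((x - y : ℝ) : ℂ))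
                * (‖qf u₀ y‖ : ℂ) ^ 2 * g y)

/-- `a(k)` built from the Jost solutions. -/
def acoef (ω11p ω21p ω11m ω21m : ℝ → ℂ → ℂ) (k : ℂ) : ℂ :=
  ω11m 0 k * (starRingEnd ℂ) (ω11p 0 ((starRingEnd ℂ) k))
    + ω21m 0 k * (starRingEnd ℂ) (ω21p 0 ((starRingEnd ℂ) k))

/-- `b(k)` built from the Jost solutions. -/
def bcoef (ω11p ω21p ω11m ω21m : ℝ → ℂ → ℂ) (k : ℂ) : ℂ :=
  (starRingEnd ℂ) (ω21p 0 ((starRingEnd ℂ) k)) * (starRingEnd ℂ) (ω11m 0 ((starRingEnd ℂ) k))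
    - (starRingEnd ℂ) (ω11p 0 ((starRingEnd ℂ) k))
        * (starRingEnd ℂ) (ω21m 0 ((starRingEnd ℂ) k))

open Filter

variable {u₀ : ℝ → ℂ}

lemma abs_qf (x : ℝ) : ‖qf u₀ x‖ = ‖deriv u₀ x‖ := by
  rw [qf, norm_mul, Complex.norm_conj]
  simp [Complex.norm_exp]

lemma memLp_d1 (hu : MemHms 3 3 u₀) : MemLp (deriv u₀) 2 volume := by
  have h := hu 1 (by norm_num)
  rw [iteratedDeriv_one] at h
  refine h.of_le (measurable_deriv u₀).aestronglyMeasurable (ae_of_all _ fun x => ?_)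
  have h1 : (1:ℝ) ≤ (1 + x ^ 2) ^ (((3:ℕ):ℝ)/2) :=
    Real.one_le_rpow (by nlinarith [sq_nonneg x]) (by norm_num)
  rw [norm_smul, Real.norm_eq_abs,
    _root_.abs_of_nonneg (by positivity : (0:ℝ) ≤ (1 + x ^ 2) ^ (((3:ℕ):ℝ)/2))]
  nlinarith [norm_nonneg (deriv u₀ x)]

lemma int_r2 (hu : MemHms 3 3 u₀) :
    Integrable (fun x => ‖qf u₀ x‖ ^ 2) volume := by
  have h2 := (memLp_two_iff_integrable_sq_norm
    (measurable_deriv u₀).aestronglyMeasurable).1 (memLp_d1 hu)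
  refine h2.congr (ae_of_all _ fun x => ?_)
  show ‖deriv u₀ x‖ ^ 2 = ‖qf u₀ x‖ ^ 2
  rw [abs_qf]

lemma mono_phi (hu : MemHms 3 3 u₀) : Monotone (phi u₀) := by
  intro x y hxy
  have hint : Integrable (fun s => ‖deriv u₀ s‖ ^ 2) volume := by
    refine (int_r2 hu).congr (ae_of_all _ fun x => ?_); simp only [abs_qf]
  exact setIntegral_mono_set hint.integrableOn
    (ae_of_all _ fun s => by positivity)
    (HasSubset.Subset.eventuallyLE (Iio_subset_Iio hxy))

lemma meas_qf (hu : MemHms 3 3 u₀) : Measurable (qf u₀) := by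
  have h1 : Measurable (phi u₀) := (mono_phi hu).measurable
  exact (continuous_star.measurable.comp (measurable_deriv u₀)).mul
    (Complex.measurable_exp.comp ((Complex.measurable_ofReal.comp h1).const_mul Complex.I))

lemma int_r (hu : MemHms 3 3 u₀) :
    Integrable (fun x => ‖qf u₀ x‖) volume := by
  have h := hu 1 (by norm_num)
  rw [iteratedDeriv_one] at h
  set w : ℝ → ℝ := fun x => (1 + x ^ 2) ^ (((3:ℕ):ℝ)/2) with hw
  have hb : ∀ x : ℝ, (0:ℝ) < 1 + x ^ 2 := fun x => by nlinarith [sq_nonneg x]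
  have hwpos : ∀ x, 0 < w x := fun x => Real.rpow_pos_of_pos (hb x) _
  have hinv2 : Integrable (fun x : ℝ => ((w x)⁻¹) ^ 2) volume := by
    refine integrable_inv_one_add_sq.mono ?_ (ae_of_all _ fun x => ?_)
    · apply Measurable.aestronglyMeasurable; fun_prop
    · rw [Real.norm_eq_abs, Real.norm_eq_abs,
        _root_.abs_of_nonneg (by positivity : (0:ℝ) ≤ ((w x)⁻¹)^2),
        _root_.abs_of_nonneg (by positivity : (0:ℝ) ≤ ((1:ℝ) + x^2)⁻¹), inv_pow]
      apply inv_anti₀ (hb x)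
      have hww : (w x) ^ 2 = (1 + x ^ 2) ^ (((3:ℕ):ℝ)) := by
        rw [hw, ← Real.rpow_natCast ((1 + x ^ 2) ^ (((3:ℕ):ℝ)/2)) 2, ← Real.rpow_mul (hb x).le]
        norm_num
      rw [hww]
      calc (1:ℝ) + x ^ 2 = (1 + x ^ 2) ^ ((1:ℝ)) := by rw [Real.rpow_one]
      _ ≤ (1 + x ^ 2) ^ (((3:ℕ):ℝ)) := Real.rpow_le_rpow_of_exponent_le (by nlinarith [sq_nonneg x]) (by norm_num)
  have hw2 : Integrable (fun x : ℝ => (w x * ‖qf u₀ x‖) ^ 2) volume := by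
    have hsm : AEStronglyMeasurable (fun x : ℝ => w x • deriv u₀ x) volume :=
      ((by fun_prop : Measurable w).smul (measurable_deriv u₀)).aestronglyMeasurable
    have h2 := (memLp_two_iff_integrable_sq_norm hsm).1 h
    refine h2.congr (ae_of_all _ fun x => ?_)
    show ‖w x • deriv u₀ x‖ ^ 2 = (w x * ‖qf u₀ x‖) ^ 2
    rw [norm_smul, Real.norm_eq_abs, _root_.abs_of_nonneg (hwpos x).le, abs_qf]
  have key : Integrable (fun x : ℝ => (((w x)⁻¹) ^ 2 + (w x * ‖qf u₀ x‖) ^ 2) / 2) volume :=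
    (hinv2.add hw2).div_const 2
  refine key.mono ((continuous_norm.measurable.comp (meas_qf hu)).aestronglyMeasurable) (ae_of_all _ fun x => ?_)
  rw [Real.norm_eq_abs, _root_.abs_of_nonneg (norm_nonneg _), Real.norm_eq_abs,
    _root_.abs_of_nonneg (by positivity)]
  have h3 := sq_nonneg ((w x)⁻¹ - w x * ‖qf u₀ x‖)
  have h4 : (w x)⁻¹ * (w x * ‖qf u₀ x‖) = ‖qf u₀ x‖ := by
    rw [← mul_assoc, inv_mul_cancel₀ (hwpos x).ne', one_mul]
  nlinarith [norm_nonneg (qf u₀ x), hwpos x]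

lemma MeasureTheory.Integrable.bdd_mul_old {α : Type*} [MeasurableSpace α] {μ : Measure α} {f g : α → ℂ}
    (hg : Integrable g μ) (hf : AEStronglyMeasurable f μ) (hb : ∃ C, ∀ x, ‖f x‖ ≤ C) :
    Integrable (fun x => f x * g x) μ :=
  hg.bdd_mul hf (c := hb.choose) (ae_of_all _ hb.choose_spec)

lemma tail_sub {h : ℝ → ℂ} (hi : Integrable h volume) {x y : ℝ} (hxy : x ≤ y) :
    (∫ t in Ioi x, h t) - (∫ t in Ioi y, h t) = ∫ t in Ioc x y, h t := by
  have hu : (∫ t in Ioi x, h t) = (∫ t in Ioc x y, h t) + (∫ t in Ioi y, h t) := by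
    rw [← setIntegral_union (Ioc_disjoint_Ioi le_rfl) measurableSet_Ioi
      hi.integrableOn hi.integrableOn, Ioc_union_Ioi_eq_Ioi hxy]
  rw [hu]; ring

lemma lead_sub {h : ℝ → ℂ} (hi : Integrable h volume) {x y : ℝ} (hxy : x ≤ y) :
    (∫ t in Iio y, h t) - (∫ t in Iio x, h t) = ∫ t in Ioc x y, h t := by
  have hu : (∫ t in Iio y, h t) = (∫ t in Iio x, h t) + (∫ t in Ico x y, h t) := by
    rw [← setIntegral_union ((Iio_disjoint_Ici le_rfl).mono_right Ico_subset_Ici_self) measurableSet_Ico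
      hi.integrableOn hi.integrableOn, Iio_union_Ico_eq_Iio hxy]
  rw [hu, setIntegral_congr_set Ico_ae_eq_Ioc]; ring

lemma tendsto_tail_Ioi {h : ℝ → ℂ} (hi : Integrable h volume) :
    Tendsto (fun x => ∫ t in Ioi x, h t) atTop (nhds 0) := by
  have h1 : Tendsto (fun b : ℝ => ∫ t in (0:ℝ)..b, h t) atTop
      (nhds (∫ t in Ioi (0:ℝ), h t)) :=
    intervalIntegral_tendsto_integral_Ioi 0 hi.integrableOn tendsto_id
  have h2 := (tendsto_const_nhds (x := ∫ t in Ioi (0:ℝ), h t) (f := atTop)).sub h1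
  rw [sub_self] at h2
  refine h2.congr' ?_
  filter_upwards [eventually_ge_atTop (0:ℝ)] with b hb
  rw [intervalIntegral.integral_of_le hb, ← tail_sub hi hb]; ring

lemma tendsto_tail_Iio {h : ℝ → ℂ} (hi : Integrable h volume) :
    Tendsto (fun x => ∫ t in Iio x, h t) atBot (nhds 0) := by
  have h1 : Tendsto (fun a : ℝ => ∫ t in a..(0:ℝ), h t) atBot
      (nhds (∫ t in Iic (0:ℝ), h t)) :=
    intervalIntegral_tendsto_integral_Iic 0 hi.integrableOn tendsto_id
  rw [show (∫ t in Iic (0:ℝ), h t) = (∫ t in Iio (0:ℝ), h t) from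
    (setIntegral_congr_set Iio_ae_eq_Iic).symm] at h1
  have h2 := (tendsto_const_nhds (x := ∫ t in Iio (0:ℝ), h t) (f := atBot)).sub h1
  rw [sub_self] at h2
  refine h2.congr' ?_
  filter_upwards [eventually_le_atBot (0:ℝ)] with a ha
  rw [intervalIntegral.integral_of_le ha, ← lead_sub hi ha]
  have : (∫ t in Ioc a 0, h t) = (∫ t in Iio (0:ℝ), h t) - ∫ t in Iio a, h t := (lead_sub hi ha).symm
  ring

lemma norm_primitive_le {r : ℝ → ℂ} (hr : Integrable r volume) (a s : ℝ) :
    ‖∫ t in a..s, r t‖ ≤ ∫ t, ‖r t‖ := by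
  refine (intervalIntegral.norm_integral_le_integral_norm_uIoc).trans ?_
  refine setIntegral_le_integral hr.norm (ae_of_all _ fun t => norm_nonneg _)

lemma fubini_sq {p r : ℝ → ℂ} (hp : Integrable p volume) (hr : Integrable r volume)
    {a b : ℝ} (hab : a ≤ b) :
    (∫ t in Ioc a b, p t) * (∫ t in Ioc a b, r t)
      = (∫ t in Ioc a b, p t * (∫ s in Ioc a t, r s))
        + (∫ t in Ioc a b, (∫ s in Ioc a t, p s) * r t) := by
  set μ := volume.restrict (Ioc a b) with hμ
  have hprod : Integrable (fun z : ℝ × ℝ => p z.1 * r z.2) (μ.prod μ) :=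
    Integrable.mul_prod (hp.integrableOn) (hr.integrableOn)
  have hset : MeasurableSet {z : ℝ × ℝ | z.1 < z.2} :=
    measurableSet_lt measurable_fst measurable_snd
  have hind : Integrable (fun z : ℝ × ℝ => if z.1 < z.2 then p z.1 * r z.2 else 0) (μ.prod μ) := by
    have heq : (fun z : ℝ × ℝ => if z.1 < z.2 then p z.1 * r z.2 else 0)
        = Set.indicator {z : ℝ × ℝ | z.1 < z.2} (fun z => p z.1 * r z.2) := by
      funext z; by_cases hz : z.1 < z.2 <;> simp [Set.indicator, hz]
    rw [heq]; exact hprod.indicator hset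
  have swap := integral_integral_swap (f := fun s t => if s < t then p s * r t else 0)
    (μ := μ) (ν := μ) hind
  have hL : (∫ (s : ℝ), (∫ (t : ℝ), (if s < t then p s * r t else 0) ∂μ) ∂μ)
      = ∫ s in Ioc a b, p s * (∫ t in Ioc s b, r t) := by
    rw [hμ]
    refine setIntegral_congr_fun measurableSet_Ioc (fun s hs => ?_)
    have heq2 : (fun t => if s < t then p s * r t else 0)
        = (Ioi s).indicator (fun t => p s * r t) := by
      funext t; by_cases ht : s < t <;> simp [Set.indicator, ht, mem_Ioi]
    show (∫ (t : ℝ), (if s < t then p s * r t else 0) ∂μ) = _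
    rw [hμ, heq2, setIntegral_indicator measurableSet_Ioi,
      show Ioc a b ∩ Ioi s = Ioc s b by rw [Ioc_inter_Ioi, max_eq_right hs.1.le],
      integral_const_mul]
  have hR : (∫ (t : ℝ), (∫ (s : ℝ), (if s < t then p s * r t else 0) ∂μ) ∂μ)
      = ∫ t in Ioc a b, (∫ s in Ioc a t, p s) * r t := by
    rw [hμ]
    refine setIntegral_congr_fun measurableSet_Ioc (fun t ht => ?_)
    have heq2 : (fun s => if s < t then p s * r t else 0)
        = (Iio t).indicator (fun s => p s * r t) := by
      funext s; by_cases hs : s < t <;> simp [Set.indicator, hs, mem_Iio]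
    show (∫ (s : ℝ), (if s < t then p s * r t else 0) ∂μ) = _
    have hseteq : Ioc a b ∩ Iio t = Ioo a t := by
      ext u; simp only [mem_inter_iff, mem_Ioc, mem_Iio, mem_Ioo]
      exact ⟨fun hh => ⟨hh.1.1, hh.2⟩, fun hh => ⟨⟨hh.1, le_trans hh.2.le ht.2⟩, hh.2⟩⟩
    rw [hμ, heq2, setIntegral_indicator measurableSet_Iio, hseteq,
      setIntegral_congr_set Ioo_ae_eq_Ioc, integral_mul_const]
  -- integrability of the first piece
  have hcont : Continuous (fun s => ∫ t in a..s, r t) :=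
    intervalIntegral.continuous_primitive (fun _ _ => hr.intervalIntegrable) a
  have hbnd : ∃ C, ∀ s : ℝ, ‖∫ t in a..s, r t‖ ≤ C := ⟨_, norm_primitive_le hr a⟩
  have hI1 : Integrable (fun s => p s * (∫ t in Ioc a s, r t)) μ := by
    have h0 : Integrable (fun s => (∫ t in a..s, r t) * p s) μ :=
      Integrable.bdd_mul_old (hp.integrableOn) (hcont.aestronglyMeasurable.restrict) hbnd
    refine h0.congr ?_
    rw [hμ, EventuallyEq, ae_restrict_iff' measurableSet_Ioc]
    refine ae_of_all _ fun s hs => ?_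
    rw [intervalIntegral.integral_of_le hs.1.le, mul_comm]
  have hI2 : Integrable (fun s => p s * (∫ t in Ioc s b, r t)) μ := by
    have h0 : Integrable (fun s => p s * (∫ t in Ioc a b, r t) - p s * (∫ t in Ioc a s, r t)) μ :=
      ((hp.integrableOn).mul_const _).sub hI1
    refine h0.congr ?_
    rw [hμ, EventuallyEq, ae_restrict_iff' measurableSet_Ioc]
    refine ae_of_all _ fun s hs => ?_
    have hsplit : (∫ t in Ioc a b, r t) = (∫ t in Ioc a s, r t) + (∫ t in Ioc s b, r t) := by
      rw [← setIntegral_union ((Ioc_disjoint_Ioi le_rfl).mono_right Ioc_subset_Ioi_self)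
        measurableSet_Ioc hr.integrableOn hr.integrableOn, Ioc_union_Ioc_eq_Ioc hs.1.le hs.2]
    rw [hsplit]; ring
  calc (∫ t in Ioc a b, p t) * (∫ t in Ioc a b, r t)
      = ∫ s in Ioc a b, p s * (∫ t in Ioc a b, r t) := (integral_mul_const _ _).symm
    _ = ∫ s in Ioc a b, (p s * (∫ t in Ioc a s, r t) + p s * (∫ t in Ioc s b, r t)) := by
        refine setIntegral_congr_fun measurableSet_Ioc (fun s hs => ?_)
        have hsplit : (∫ t in Ioc a b, r t) = (∫ t in Ioc a s, r t) + (∫ t in Ioc s b, r t) := by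
          rw [← setIntegral_union ((Ioc_disjoint_Ioi le_rfl).mono_right Ioc_subset_Ioi_self)
            measurableSet_Ioc hr.integrableOn hr.integrableOn, Ioc_union_Ioc_eq_Ioc hs.1.le hs.2]
        rw [hsplit]; ring
    _ = (∫ s in Ioc a b, p s * (∫ t in Ioc a s, r t))
        + (∫ s in Ioc a b, p s * (∫ t in Ioc s b, r t)) := integral_add hI1 hI2
    _ = (∫ t in Ioc a b, p t * (∫ s in Ioc a t, r s))
        + (∫ t in Ioc a b, (∫ s in Ioc a t, p s) * r t) := by
        rw [show (∫ s in Ioc a b, p s * (∫ t in Ioc s b, r t))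
            = (∫ t in Ioc a b, (∫ s in Ioc a t, p s) * r t) from by rw [← hL, ← hR]; exact swap]

lemma prod_rule {p r f g : ℝ → ℂ}
    (hp : Integrable p volume) (hr : Integrable r volume)
    (hpg : Integrable (fun t => p t * g t) volume)
    (hfr : Integrable (fun t => f t * r t) volume)
    (hf : ∀ x y : ℝ, x ≤ y → f y - f x = ∫ t in Ioc x y, p t)
    (hg : ∀ x y : ℝ, x ≤ y → g y - g x = ∫ t in Ioc x y, r t)
    {a b : ℝ} (hab : a ≤ b) :
    f b * g b - f a * g a = ∫ t in Ioc a b, (p t * g t + f t * r t) := by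
  have hfb := hf a b hab
  have hgb := hg a b hab
  have hmain : (∫ t in Ioc a b, (p t * g t + f t * r t))
      = ∫ t in Ioc a b, (p t * g a + (p t * (∫ s in Ioc a t, r s))
          + (f a * r t + (∫ s in Ioc a t, p s) * r t)) := by
    refine setIntegral_congr_fun measurableSet_Ioc (fun t ht => ?_)
    have h1 : g t = g a + ∫ s in Ioc a t, r s := by rw [← hg a t ht.1.le]; ring
    have h2 : f t = f a + ∫ s in Ioc a t, p s := by rw [← hf a t ht.1.le]; ring
    rw [h1, h2]; ring
  have hJ1 : Integrable (fun t => p t * g a) (volume.restrict (Ioc a b)) :=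
    (hp.integrableOn).mul_const _
  have hJ2 : Integrable (fun t => p t * (∫ s in Ioc a t, r s)) (volume.restrict (Ioc a b)) := by
    refine (((hpg.integrableOn).sub ((hp.integrableOn).mul_const (g a))).congr ?_ :
      Integrable _ _)
    rw [EventuallyEq, ae_restrict_iff' measurableSet_Ioc]
    refine ae_of_all _ fun t ht => ?_
    show p t * g t - p t * g a = p t * (∫ s in Ioc a t, r s)
    have h1 : g t = g a + ∫ s in Ioc a t, r s := by rw [← hg a t ht.1.le]; ring
    rw [h1]; ring
  have hJ3 : Integrable (fun t => f a * r t) (volume.restrict (Ioc a b)) :=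
    (hr.integrableOn).const_mul _
  have hJ4 : Integrable (fun t => (∫ s in Ioc a t, p s) * r t) (volume.restrict (Ioc a b)) := by
    refine (((hfr.integrableOn).sub ((hr.integrableOn).const_mul (f a))).congr ?_ :
      Integrable _ _)
    rw [EventuallyEq, ae_restrict_iff' measurableSet_Ioc]
    refine ae_of_all _ fun t ht => ?_
    show f t * r t - f a * r t = (∫ s in Ioc a t, p s) * r t
    have h2 : f t = f a + ∫ s in Ioc a t, p s := by rw [← hf a t ht.1.le]; ring
    rw [h2]; ring
  have hfub := fubini_sq hp hr hab
  have h12 : Integrable (fun t => p t * g a + p t * (∫ s in Ioc a t, r s))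
      (volume.restrict (Ioc a b)) := hJ1.add hJ2
  have h34 : Integrable (fun t => f a * r t + (∫ s in Ioc a t, p s) * r t)
      (volume.restrict (Ioc a b)) := hJ3.add hJ4
  rw [hmain, integral_add h12 h34, integral_add hJ1 hJ2,
    integral_add hJ3 hJ4, integral_mul_const, integral_const_mul]
  rw [← hfb, ← hgb] at hfub ⊢
  linear_combination hfub

def Efun (k : ℂ) (t : ℝ) : ℂ := Complex.exp (-(2 * Complex.I * k ^ 2 * (t:ℂ)))
def Gfun (k : ℂ) (g : ℝ → ℂ) (x : ℝ) : ℂ := Efun k x * g x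
def pf (u₀ : ℝ → ℂ) (k : ℂ) (f g : ℝ → ℂ) (t : ℝ) : ℂ :=
  k * ((starRingEnd ℂ) (qf u₀ t) * g t)
    + (Complex.I/2) * (((‖qf u₀ t‖ : ℂ))^2 * f t)
def pG (u₀ : ℝ → ℂ) (k : ℂ) (f g : ℝ → ℂ) (t : ℝ) : ℂ :=
  -(k * (Efun k t * (qf u₀ t * f t))
    + (Complex.I/2) * (Efun k t * (((‖qf u₀ t‖ : ℂ))^2 * g t)))

structure SolDataC (u₀ : ℝ → ℂ) (k : ℂ) (l : Filter ℝ) (f g : ℝ → ℂ) : Prop where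
  contf : Continuous f
  contg : Continuous g
  bdd : ∃ C, ∀ x, ‖f x‖ ≤ C ∧ ‖g x‖ ≤ C
  intp : Integrable (pf u₀ k f g) volume
  intP : Integrable (pG u₀ k f g) volume
  repf : ∀ x y : ℝ, x ≤ y → f y - f x = ∫ t in Ioc x y, pf u₀ k f g t
  repG : ∀ x y : ℝ, x ≤ y → Gfun k g y - Gfun k g x = ∫ t in Ioc x y, pG u₀ k f g t
  limf : Tendsto f l (nhds 1)
  limG : Tendsto (Gfun k g) l (nhds 0)

lemma abs_Efun {k : ℂ} (hk : (k^2).im = 0) (t : ℝ) : ‖Efun k t‖ = 1 := by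
  rw [Efun, Complex.norm_exp]
  have h1 : (-(2 * Complex.I * k ^ 2 * (t:ℂ))).re = 0 := by
    simp [Complex.mul_re, Complex.mul_im, hk]
  rw [h1, Real.exp_zero]

variable {u₀ : ℝ → ℂ}


lemma bound_mul_q {v : ℝ → ℂ} {C : ℝ} (hv : ∀ x, ‖v x‖ ≤ C) (z w : ℂ) (t : ℝ) (hz : ‖z‖ = ‖w‖) :
    ‖z * v t‖ ≤ C * ‖w‖ := by
  have h0 : ‖z * v t‖ = ‖z‖ * ‖v t‖ := norm_mul _ _
  show ‖z * v t‖ ≤ _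
  rw [h0, hz, mul_comm]
  exact mul_le_mul_of_nonneg_right (hv t) (norm_nonneg w)

lemma data_plus (hu : MemHms 3 3 u₀) {k : ℂ} (hk : (k^2).im = 0) {f g : ℝ → ℂ}
    (hs : SolPlus u₀ k f g) : SolDataC u₀ k atTop f g := by
  obtain ⟨hcf, hcg, ⟨C, hC⟩, heq⟩ := hs
  have hq := meas_qf hu
  have hr := int_r hu
  have hr2 := int_r2 hu
  have hEc : Continuous (Efun k) :=
    Complex.continuous_exp.comp ((continuous_const.mul Complex.continuous_ofReal).neg)
  have habsE : ∀ t, ‖Efun k t‖ = 1 := abs_Efun hk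
  have hqc : Measurable (fun t => (starRingEnd ℂ) (qf u₀ t)) :=
    continuous_star.measurable.comp hq
  have habsm : Measurable (fun t => ((‖qf u₀ t‖ : ℂ))^2) := by
    apply Measurable.pow_const
    exact Complex.measurable_ofReal.comp (continuous_norm.measurable.comp hq)
  have hiA1 : Integrable (fun t => (starRingEnd ℂ) (qf u₀ t) * g t) volume := by
    refine (hr.const_mul C).mono' ((hqc.mul hcg.measurable).aestronglyMeasurable)
      (ae_of_all _ fun t => ?_)
    exact bound_mul_q (fun x => (hC x).2) _ _ t (Complex.norm_conj _)
  have hiA2 : Integrable (fun t => ((‖qf u₀ t‖ : ℂ))^2 * f t) volume := by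
    refine (hr2.const_mul C).mono' ((habsm.mul hcf.measurable).aestronglyMeasurable)
      (ae_of_all _ fun t => ?_)
    have := bound_mul_q (fun x => (hC x).1) (((‖qf u₀ t‖ : ℂ))^2)
      (((‖qf u₀ t‖ : ℂ))^2) t rfl
    refine this.trans (le_of_eq ?_)
    congr 1
    rw [← Complex.ofReal_pow]
    exact Complex.norm_of_nonneg (by positivity)
  have hiA3 : Integrable (fun t => Efun k t * (qf u₀ t * f t)) volume := by
    refine (hr.const_mul C).mono' ((hEc.measurable.mul (hq.mul hcf.measurable)).aestronglyMeasurable)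
      (ae_of_all _ fun t => ?_)
    show ‖_‖ ≤ _
    rw [norm_mul, habsE, one_mul, norm_mul, mul_comm]
    exact mul_le_mul_of_nonneg_right (hC t).1 (norm_nonneg _)
  have hiA4 : Integrable (fun t => Efun k t * (((‖qf u₀ t‖ : ℂ))^2 * g t)) volume := by
    refine (hr2.const_mul C).mono' ((hEc.measurable.mul (habsm.mul hcg.measurable)).aestronglyMeasurable)
      (ae_of_all _ fun t => ?_)
    show ‖_‖ ≤ _
    rw [norm_mul, habsE, one_mul, norm_mul]
    have h6 : ‖((‖qf u₀ t‖ : ℂ))^2‖ = ‖qf u₀ t‖ ^ 2 := by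
      rw [← Complex.ofReal_pow]; exact Complex.norm_of_nonneg (by positivity)
    rw [h6, mul_comm]
    exact mul_le_mul_of_nonneg_right (hC t).2 (by positivity)
  have hintp : Integrable (pf u₀ k f g) volume := by
    have := (hiA1.const_mul k).add (hiA2.const_mul (Complex.I/2))
    exact this.congr (ae_of_all _ fun t => rfl)
  have hintP : Integrable (pG u₀ k f g) volume := by
    have := ((hiA3.const_mul k).add (hiA4.const_mul (Complex.I/2))).neg
    exact this.congr (ae_of_all _ fun t => rfl)
  -- representation of G as a tail integral
  have hGrep : ∀ x : ℝ, Gfun k g x = ∫ t in Ioi x,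
      (k * (Efun k t * (qf u₀ t * f t))
        + (Complex.I/2) * (Efun k t * (((‖qf u₀ t‖ : ℂ))^2 * g t))) := by
    intro x
    have e2 := (heq x).2
    have key : ∀ t : ℝ, Efun k x * Complex.exp (2 * Complex.I * k^2 * ((x - t : ℝ):ℂ))
        = Efun k t := by
      intro t
      rw [Efun, Efun, ← Complex.exp_add]
      congr 1
      push_cast
      ring
    have s1 : Efun k x * (∫ t in Ioi x,
        Complex.exp (2 * Complex.I * k^2 * ((x - t : ℝ):ℂ)) * qf u₀ t * f t)
        = ∫ t in Ioi x, Efun k t * (qf u₀ t * f t) := by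
      rw [← integral_const_mul]
      refine setIntegral_congr_fun measurableSet_Ioi (fun t _ => ?_)
      rw [show Efun k x * (Complex.exp (2 * Complex.I * k^2 * ((x - t : ℝ):ℂ)) * qf u₀ t * f t)
        = (Efun k x * Complex.exp (2 * Complex.I * k^2 * ((x - t : ℝ):ℂ))) * (qf u₀ t * f t) from by ring,
        key t]
    have s2 : Efun k x * (∫ t in Ioi x,
        Complex.exp (2 * Complex.I * k^2 * ((x - t : ℝ):ℂ)) * ((‖qf u₀ t‖ : ℂ))^2 * g t)
        = ∫ t in Ioi x, Efun k t * (((‖qf u₀ t‖ : ℂ))^2 * g t) := by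
      rw [← integral_const_mul]
      refine setIntegral_congr_fun measurableSet_Ioi (fun t _ => ?_)
      rw [show Efun k x * (Complex.exp (2 * Complex.I * k^2 * ((x - t : ℝ):ℂ)) * ((‖qf u₀ t‖ : ℂ))^2 * g t)
        = (Efun k x * Complex.exp (2 * Complex.I * k^2 * ((x - t : ℝ):ℂ))) * (((‖qf u₀ t‖ : ℂ))^2 * g t) from by ring,
        key t]
    have comb : Gfun k g x = k * (∫ t in Ioi x, Efun k t * (qf u₀ t * f t))
        + (Complex.I/2) * ∫ t in Ioi x, Efun k t * (((‖qf u₀ t‖ : ℂ))^2 * g t) := by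
      rw [Gfun, e2, ← s1, ← s2]; ring
    rw [comb, ← integral_const_mul, ← integral_const_mul, ← integral_add
      ((hiA3.integrableOn).const_mul k) ((hiA4.integrableOn).const_mul (Complex.I/2))]
  refine ⟨hcf, hcg, ⟨C, hC⟩, hintp, hintP, ?_, ?_, ?_, ?_⟩
  · -- repf
    intro x y hxy
    have c1 : f y - f x = k * ((∫ t in Ioi x, (starRingEnd ℂ) (qf u₀ t) * g t)
          - (∫ t in Ioi y, (starRingEnd ℂ) (qf u₀ t) * g t))
        + (Complex.I/2) * ((∫ t in Ioi x, ((‖qf u₀ t‖ : ℂ))^2 * f t)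
          - (∫ t in Ioi y, ((‖qf u₀ t‖ : ℂ))^2 * f t)) := by
      rw [(heq x).1, (heq y).1]; ring
    rw [c1, tail_sub hiA1 hxy, tail_sub hiA2 hxy, ← integral_const_mul, ← integral_const_mul,
      ← integral_add ((hiA1.integrableOn).const_mul k) ((hiA2.integrableOn).const_mul (Complex.I/2))]
    rfl
  · -- repG
    intro x y hxy
    have c1 : Gfun k g y - Gfun k g x
        = -((∫ t in Ioi x, (k * (Efun k t * (qf u₀ t * f t))
            + (Complex.I/2) * (Efun k t * (((‖qf u₀ t‖ : ℂ))^2 * g t))))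
          - (∫ t in Ioi y, (k * (Efun k t * (qf u₀ t * f t))
            + (Complex.I/2) * (Efun k t * (((‖qf u₀ t‖ : ℂ))^2 * g t))))) := by
      rw [hGrep x, hGrep y]; ring
    have hiD : Integrable (fun t => k * (Efun k t * (qf u₀ t * f t))
        + (Complex.I/2) * (Efun k t * (((‖qf u₀ t‖ : ℂ))^2 * g t))) volume :=
      (hiA3.const_mul k).add (hiA4.const_mul (Complex.I/2))
    rw [c1, tail_sub hiD hxy, ← integral_neg]
    rfl
  · -- limf
    have l1 := tendsto_tail_Ioi hiA1
    have l2 := tendsto_tail_Ioi hiA2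
    have l3 : Tendsto (fun x => 1 - k * (∫ t in Ioi x, (starRingEnd ℂ) (qf u₀ t) * g t)
        - (Complex.I/2) * ∫ t in Ioi x, ((‖qf u₀ t‖ : ℂ))^2 * f t) atTop
        (nhds (1 - k * 0 - (Complex.I/2) * 0)) :=
      (tendsto_const_nhds.sub (l1.const_mul k)).sub (l2.const_mul (Complex.I/2))
    simp only [mul_zero, sub_zero] at l3
    exact l3.congr (fun x => ((heq x).1).symm)
  · -- limG
    have hiD : Integrable (fun t => k * (Efun k t * (qf u₀ t * f t))
        + (Complex.I/2) * (Efun k t * (((‖qf u₀ t‖ : ℂ))^2 * g t))) volume :=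
      (hiA3.const_mul k).add (hiA4.const_mul (Complex.I/2))
    exact (tendsto_tail_Ioi hiD).congr (fun x => (hGrep x).symm)

lemma data_minus (hu : MemHms 3 3 u₀) {k : ℂ} (hk : (k^2).im = 0) {f g : ℝ → ℂ}
    (hs : SolMinus u₀ k f g) : SolDataC u₀ k atBot f g := by
  obtain ⟨hcf, hcg, ⟨C, hC⟩, heq⟩ := hs
  have hq := meas_qf hu
  have hr := int_r hu
  have hr2 := int_r2 hu
  have hEc : Continuous (Efun k) :=
    Complex.continuous_exp.comp ((continuous_const.mul Complex.continuous_ofReal).neg)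
  have habsE : ∀ t, ‖Efun k t‖ = 1 := abs_Efun hk
  have hqc : Measurable (fun t => (starRingEnd ℂ) (qf u₀ t)) :=
    continuous_star.measurable.comp hq
  have habsm : Measurable (fun t => ((‖qf u₀ t‖ : ℂ))^2) := by
    apply Measurable.pow_const
    exact Complex.measurable_ofReal.comp (continuous_norm.measurable.comp hq)
  have hiA1 : Integrable (fun t => (starRingEnd ℂ) (qf u₀ t) * g t) volume := by
    refine (hr.const_mul C).mono' ((hqc.mul hcg.measurable).aestronglyMeasurable)
      (ae_of_all _ fun t => ?_)
    exact bound_mul_q (fun x => (hC x).2) _ _ t (Complex.norm_conj _)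
  have hiA2 : Integrable (fun t => ((‖qf u₀ t‖ : ℂ))^2 * f t) volume := by
    refine (hr2.const_mul C).mono' ((habsm.mul hcf.measurable).aestronglyMeasurable)
      (ae_of_all _ fun t => ?_)
    have := bound_mul_q (fun x => (hC x).1) (((‖qf u₀ t‖ : ℂ))^2)
      (((‖qf u₀ t‖ : ℂ))^2) t rfl
    refine this.trans (le_of_eq ?_)
    congr 1
    rw [← Complex.ofReal_pow]
    exact Complex.norm_of_nonneg (by positivity)
  have hiA3 : Integrable (fun t => Efun k t * (qf u₀ t * f t)) volume := by
    refine (hr.const_mul C).mono' ((hEc.measurable.mul (hq.mul hcf.measurable)).aestronglyMeasurable)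
      (ae_of_all _ fun t => ?_)
    show ‖_‖ ≤ _
    rw [norm_mul, habsE, one_mul, norm_mul, mul_comm]
    exact mul_le_mul_of_nonneg_right (hC t).1 (norm_nonneg _)
  have hiA4 : Integrable (fun t => Efun k t * (((‖qf u₀ t‖ : ℂ))^2 * g t)) volume := by
    refine (hr2.const_mul C).mono' ((hEc.measurable.mul (habsm.mul hcg.measurable)).aestronglyMeasurable)
      (ae_of_all _ fun t => ?_)
    show ‖_‖ ≤ _
    rw [norm_mul, habsE, one_mul, norm_mul]
    have h6 : ‖((‖qf u₀ t‖ : ℂ))^2‖ = ‖qf u₀ t‖ ^ 2 := by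
      rw [← Complex.ofReal_pow]; exact Complex.norm_of_nonneg (by positivity)
    rw [h6, mul_comm]
    exact mul_le_mul_of_nonneg_right (hC t).2 (by positivity)
  have hintp : Integrable (pf u₀ k f g) volume := by
    have := (hiA1.const_mul k).add (hiA2.const_mul (Complex.I/2))
    exact this.congr (ae_of_all _ fun t => rfl)
  have hintP : Integrable (pG u₀ k f g) volume := by
    have := ((hiA3.const_mul k).add (hiA4.const_mul (Complex.I/2))).neg
    exact this.congr (ae_of_all _ fun t => rfl)
  have hGrep : ∀ x : ℝ, Gfun k g x = -∫ t in Iio x,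
      (k * (Efun k t * (qf u₀ t * f t))
        + (Complex.I/2) * (Efun k t * (((‖qf u₀ t‖ : ℂ))^2 * g t))) := by
    intro x
    have e2 := (heq x).2
    have key : ∀ t : ℝ, Efun k x * Complex.exp (2 * Complex.I * k^2 * ((x - t : ℝ):ℂ))
        = Efun k t := by
      intro t
      rw [Efun, Efun, ← Complex.exp_add]
      congr 1
      push_cast
      ring
    have s1 : Efun k x * (∫ t in Iio x,
        Complex.exp (2 * Complex.I * k^2 * ((x - t : ℝ):ℂ)) * qf u₀ t * f t)
        = ∫ t in Iio x, Efun k t * (qf u₀ t * f t) := by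
      rw [← integral_const_mul]
      refine setIntegral_congr_fun measurableSet_Iio (fun t _ => ?_)
      rw [show Efun k x * (Complex.exp (2 * Complex.I * k^2 * ((x - t : ℝ):ℂ)) * qf u₀ t * f t)
        = (Efun k x * Complex.exp (2 * Complex.I * k^2 * ((x - t : ℝ):ℂ))) * (qf u₀ t * f t) from by ring,
        key t]
    have s2 : Efun k x * (∫ t in Iio x,
        Complex.exp (2 * Complex.I * k^2 * ((x - t : ℝ):ℂ)) * ((‖qf u₀ t‖ : ℂ))^2 * g t)
        = ∫ t in Iio x, Efun k t * (((‖qf u₀ t‖ : ℂ))^2 * g t) := by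
      rw [← integral_const_mul]
      refine setIntegral_congr_fun measurableSet_Iio (fun t _ => ?_)
      rw [show Efun k x * (Complex.exp (2 * Complex.I * k^2 * ((x - t : ℝ):ℂ)) * ((‖qf u₀ t‖ : ℂ))^2 * g t)
        = (Efun k x * Complex.exp (2 * Complex.I * k^2 * ((x - t : ℝ):ℂ))) * (((‖qf u₀ t‖ : ℂ))^2 * g t) from by ring,
        key t]
    have comb : Gfun k g x = -(k * (∫ t in Iio x, Efun k t * (qf u₀ t * f t))
        + (Complex.I/2) * ∫ t in Iio x, Efun k t * (((‖qf u₀ t‖ : ℂ))^2 * g t)) := by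
      rw [Gfun, e2, ← s1, ← s2]; ring
    rw [comb, ← integral_const_mul, ← integral_const_mul, ← integral_add
      ((hiA3.integrableOn).const_mul k) ((hiA4.integrableOn).const_mul (Complex.I/2))]
  refine ⟨hcf, hcg, ⟨C, hC⟩, hintp, hintP, ?_, ?_, ?_, ?_⟩
  · intro x y hxy
    have c1 : f y - f x = k * ((∫ t in Iio y, (starRingEnd ℂ) (qf u₀ t) * g t)
          - (∫ t in Iio x, (starRingEnd ℂ) (qf u₀ t) * g t))
        + (Complex.I/2) * ((∫ t in Iio y, ((‖qf u₀ t‖ : ℂ))^2 * f t)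
          - (∫ t in Iio x, ((‖qf u₀ t‖ : ℂ))^2 * f t)) := by
      rw [(heq x).1, (heq y).1]; ring
    rw [c1, lead_sub hiA1 hxy, lead_sub hiA2 hxy, ← integral_const_mul, ← integral_const_mul,
      ← integral_add ((hiA1.integrableOn).const_mul k) ((hiA2.integrableOn).const_mul (Complex.I/2))]
    rfl
  · intro x y hxy
    have hiD : Integrable (fun t => k * (Efun k t * (qf u₀ t * f t))
        + (Complex.I/2) * (Efun k t * (((‖qf u₀ t‖ : ℂ))^2 * g t))) volume :=
      (hiA3.const_mul k).add (hiA4.const_mul (Complex.I/2))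
    have c1 : Gfun k g y - Gfun k g x
        = -((∫ t in Iio y, (k * (Efun k t * (qf u₀ t * f t))
            + (Complex.I/2) * (Efun k t * (((‖qf u₀ t‖ : ℂ))^2 * g t))))
          - (∫ t in Iio x, (k * (Efun k t * (qf u₀ t * f t))
            + (Complex.I/2) * (Efun k t * (((‖qf u₀ t‖ : ℂ))^2 * g t))))) := by
      rw [hGrep x, hGrep y]; ring
    rw [c1, lead_sub hiD hxy, ← integral_neg]
    rfl
  · have l1 := tendsto_tail_Iio hiA1
    have l2 := tendsto_tail_Iio hiA2
    have l3 : Tendsto (fun x => 1 - k * (-∫ t in Iio x, (starRingEnd ℂ) (qf u₀ t) * g t)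
        - (Complex.I/2) * -∫ t in Iio x, ((‖qf u₀ t‖ : ℂ))^2 * f t) atBot
        (nhds (1 - k * (-0) - (Complex.I/2) * (-0))) :=
      (tendsto_const_nhds.sub ((l1.neg).const_mul k)).sub ((l2.neg).const_mul (Complex.I/2))
    simp only [neg_zero, mul_zero, sub_zero] at l3
    exact l3.congr (fun x => ((heq x).1).symm)
  · have hiD : Integrable (fun t => k * (Efun k t * (qf u₀ t * f t))
        + (Complex.I/2) * (Efun k t * (((‖qf u₀ t‖ : ℂ))^2 * g t))) volume :=
      (hiA3.const_mul k).add (hiA4.const_mul (Complex.I/2))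
    have := (tendsto_tail_Iio hiD).neg
    rw [neg_zero] at this
    exact this.congr (fun x => (hGrep x).symm)

lemma int_mul_bdd {p v : ℝ → ℂ} (hp : Integrable p volume) (hv : AEStronglyMeasurable v volume)
    (hb : ∃ C, ∀ x, ‖v x‖ ≤ C) : Integrable (fun t => p t * v t) volume := by
  have h0 := hp.bdd_mul_old hv hb
  exact h0.congr (ae_of_all _ fun t => mul_comm _ _)

lemma int_conj {p : ℝ → ℂ} (hp : Integrable p volume) :
    Integrable (fun t => (starRingEnd ℂ) (p t)) volume := by
  refine hp.norm.mono' ?_ (ae_of_all _ fun t => ?_)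
  · exact (continuous_star.comp_aestronglyMeasurable hp.aestronglyMeasurable)
  · exact (RCLike.norm_conj _).le

lemma Efun_zero (k : ℂ) : Efun k 0 = 1 := by simp [Efun]

lemma cancel_conj {u₀ : ℝ → ℂ} {k k₂ ε : ℂ} (hk : (k^2).im = 0) (hkk : k₂^2 = k^2)
    (hε : ε^2 = 1) (hck : (starRingEnd ℂ) k₂ = ε * k) (f g f₂ g₂ : ℝ → ℂ) (t : ℝ) :
    pf u₀ k f g t * (starRingEnd ℂ) (f₂ t) + f t * (starRingEnd ℂ) (pf u₀ k₂ f₂ g₂ t)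
      + ε * (pG u₀ k f g t * (starRingEnd ℂ) (Gfun k₂ g₂ t)
        + Gfun k g t * (starRingEnd ℂ) (pG u₀ k₂ f₂ g₂ t)) = 0 := by
  have hconj2 : (starRingEnd ℂ) (k₂^2) = k^2 := by rw [map_pow, hck, mul_pow, hε, one_mul]
  have hE : (starRingEnd ℂ) (Efun k₂ t) * Efun k t = 1 := by
    rw [Efun, Efun, ← Complex.exp_conj, ← Complex.exp_add,
      show (starRingEnd ℂ) (-(2 * Complex.I * k₂ ^ 2 * (t:ℂ)))
          + -(2 * Complex.I * k ^ 2 * (t:ℂ)) = 0 from ?_, Complex.exp_zero]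
    simp only [map_neg, map_mul, Complex.conj_I, Complex.conj_ofReal, map_ofNat, hconj2]
    ring
  simp only [pf, pG, Gfun, map_add, map_mul, map_neg, map_pow, map_div₀, map_ofNat,
    Complex.conj_I, Complex.conj_ofReal, Complex.conj_conj, hck]
  linear_combination (-(ε * k * qf u₀ t * f t * (starRingEnd ℂ) (g₂ t))
      - k * (starRingEnd ℂ) (qf u₀ t) * g t * (starRingEnd ℂ) (f₂ t)) * hE
    + (-((starRingEnd ℂ) (Efun k₂ t) * Efun k t * k * (starRingEnd ℂ) (qf u₀ t) * g t
      * (starRingEnd ℂ) (f₂ t))) * hε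

lemma cancel_zero {u₀ : ℝ → ℂ} {k k₂ : ℂ} (hkk : k₂^2 = k^2) (hk2 : k₂ = -k)
    (f g f₂ g₂ : ℝ → ℂ) (t : ℝ) :
    pf u₀ k f g t * Gfun k₂ g₂ t + f t * pG u₀ k₂ f₂ g₂ t
      + (pG u₀ k f g t * f₂ t + Gfun k g t * pf u₀ k₂ f₂ g₂ t) = 0 := by
  have h9 : (-k:ℂ)^2 = k^2 := by ring
  have hEE : Efun (-k) t = Efun k t := by rw [Efun, Efun, h9]
  simp only [pf, pG, Gfun, hk2, hEE]
  ring

lemma pair_conj {u₀ : ℝ → ℂ} {k k₂ ε : ℂ} {l : Filter ℝ} [hl : l.NeBot]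
    (hdir : l = atTop ∨ l = atBot)
    (hk : (k^2).im = 0) (hkk : k₂^2 = k^2) (hε : ε^2 = 1)
    (hck : (starRingEnd ℂ) k₂ = ε * k)
    {f g f₂ g₂ : ℝ → ℂ}
    (d1 : SolDataC u₀ k l f g) (d2 : SolDataC u₀ k₂ l f₂ g₂) :
    f 0 * (starRingEnd ℂ) (f₂ 0) + ε * (g 0 * (starRingEnd ℂ) (g₂ 0)) = 1 := by
  have hk₂ : (k₂^2).im = 0 := by rw [hkk]; exact hk
  obtain ⟨C1, hC1⟩ := d1.bdd
  obtain ⟨C2, hC2⟩ := d2.bdd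
  set cf₂ : ℝ → ℂ := fun x => (starRingEnd ℂ) (f₂ x) with hcf₂
  set cG₂ : ℝ → ℂ := fun x => (starRingEnd ℂ) (Gfun k₂ g₂ x) with hcG₂
  set cp₂ : ℝ → ℂ := fun t => (starRingEnd ℂ) (pf u₀ k₂ f₂ g₂ t) with hcp₂
  set cP₂ : ℝ → ℂ := fun t => (starRingEnd ℂ) (pG u₀ k₂ f₂ g₂ t) with hcP₂
  have rep_cf₂ : ∀ x y : ℝ, x ≤ y → cf₂ y - cf₂ x = ∫ t in Ioc x y, cp₂ t := by
    intro x y hxy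
    rw [hcp₂]
    rw [integral_conj, ← d2.repf x y hxy, map_sub]
  have rep_cG₂ : ∀ x y : ℝ, x ≤ y → cG₂ y - cG₂ x = ∫ t in Ioc x y, cP₂ t := by
    intro x y hxy
    rw [hcP₂]
    rw [integral_conj, ← d2.repG x y hxy, map_sub]
  have hicp₂ : Integrable cp₂ volume := int_conj d2.intp
  have hicP₂ : Integrable cP₂ volume := int_conj d2.intP
  have hbf : ∃ C, ∀ x, ‖f x‖ ≤ C := ⟨C1, fun x => (hC1 x).1⟩
  have hbcf₂ : ∃ C, ∀ x, ‖cf₂ x‖ ≤ C := ⟨C2, fun x => by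
    rw [hcf₂]; exact (RCLike.norm_conj _).le.trans (hC2 x).1⟩
  have hbG : ∃ C, ∀ x, ‖Gfun k g x‖ ≤ C := ⟨C1, fun x => by
    show ‖_‖ ≤ _
    rw [Gfun, norm_mul, abs_Efun hk, one_mul]; exact (hC1 x).2⟩
  have hbcG₂ : ∃ C, ∀ x, ‖cG₂ x‖ ≤ C := ⟨C2, fun x => by
    rw [hcG₂]
    refine (RCLike.norm_conj _).le.trans ?_
    show ‖_‖ ≤ _
    rw [Gfun, norm_mul, abs_Efun hk₂, one_mul]; exact (hC2 x).2⟩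
  have hccf₂ : Continuous cf₂ := continuous_star.comp d2.contf
  have hcGf : Continuous (Gfun k g) :=
    (Complex.continuous_exp.comp ((continuous_const.mul Complex.continuous_ofReal).neg)).mul d1.contg
  have hcGf₂ : Continuous (Gfun k₂ g₂) :=
    (Complex.continuous_exp.comp ((continuous_const.mul Complex.continuous_ofReal).neg)).mul d2.contg
  have hccG₂ : Continuous cG₂ := continuous_star.comp hcGf₂
  have hP1 := fun (a b : ℝ) (hab : a ≤ b) => prod_rule d1.intp hicp₂
    (int_mul_bdd d1.intp hccf₂.aestronglyMeasurable hbcf₂)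
    (hicp₂.bdd_mul_old d1.contf.aestronglyMeasurable hbf)
    d1.repf rep_cf₂ hab
  have hP2 := fun (a b : ℝ) (hab : a ≤ b) => prod_rule d1.intP hicP₂
    (int_mul_bdd d1.intP hccG₂.aestronglyMeasurable hbcG₂)
    (hicP₂.bdd_mul_old hcGf.aestronglyMeasurable hbG)
    d1.repG rep_cG₂ hab
  set F : ℝ → ℂ := fun x => f x * cf₂ x + ε * (Gfun k g x * cG₂ x) with hF
  have hconst : ∀ a b : ℝ, a ≤ b → F b = F a := by
    intro a b hab
    have e1 := hP1 a b hab
    have e2 := hP2 a b hab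
    have hi1 : Integrable (fun t => pf u₀ k f g t * cf₂ t + f t * cp₂ t)
        (volume.restrict (Ioc a b)) :=
      ((int_mul_bdd d1.intp hccf₂.aestronglyMeasurable hbcf₂).add
        (hicp₂.bdd_mul_old d1.contf.aestronglyMeasurable hbf)).integrableOn
    have hi2 : Integrable (fun t => pG u₀ k f g t * cG₂ t + Gfun k g t * cP₂ t)
        (volume.restrict (Ioc a b)) :=
      ((int_mul_bdd d1.intP hccG₂.aestronglyMeasurable hbcG₂).add
        (hicP₂.bdd_mul_old hcGf.aestronglyMeasurable hbG)).integrableOn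
    have comb : F b - F a = ∫ t in Ioc a b,
        ((pf u₀ k f g t * cf₂ t + f t * cp₂ t)
          + ε * (pG u₀ k f g t * cG₂ t + Gfun k g t * cP₂ t)) := by
      rw [integral_add hi1 (hi2.const_mul ε), integral_const_mul, ← e1, ← e2, hF]
      ring
    have hzero : ∀ t : ℝ, (pf u₀ k f g t * cf₂ t + f t * cp₂ t)
          + ε * (pG u₀ k f g t * cG₂ t + Gfun k g t * cP₂ t) = 0 := by
      intro t
      have := cancel_conj (u₀ := u₀) hk hkk hε hck f g f₂ g₂ t
      rw [hcf₂, hcG₂, hcp₂, hcP₂]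
      linear_combination this
    rw [show (∫ t in Ioc a b,
        ((pf u₀ k f g t * cf₂ t + f t * cp₂ t)
          + ε * (pG u₀ k f g t * cG₂ t + Gfun k g t * cP₂ t))) = 0 from by
      rw [setIntegral_congr_fun measurableSet_Ioc (fun t _ => hzero t)]
      exact integral_zero _ _] at comb
    exact sub_eq_zero.mp comb
  -- limits
  have limcf₂ : Tendsto cf₂ l (nhds 1) := by
    have h7 := (Complex.continuous_conj.tendsto (1:ℂ)).comp d2.limf
    rw [map_one] at h7
    exact h7
  have limcG₂ : Tendsto cG₂ l (nhds 0) := by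
    have h7 := (Complex.continuous_conj.tendsto (0:ℂ)).comp d2.limG
    rw [map_zero] at h7
    exact h7
  have limF : Tendsto F l (nhds 1) := by
    have h0 : Tendsto F l (nhds (1 * 1 + ε * (0 * 0))) :=
      (d1.limf.mul limcf₂).add (tendsto_const_nhds.mul (d1.limG.mul limcG₂))
    simpa using h0
  have limF0 : Tendsto F l (nhds (F 0)) := by
    rcases hdir with rfl | rfl
    · refine tendsto_const_nhds.congr' ?_
      filter_upwards [eventually_ge_atTop (0:ℝ)] with x hx
      exact (hconst 0 x hx).symm
    · refine tendsto_const_nhds.congr' ?_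
      filter_upwards [eventually_le_atBot (0:ℝ)] with x hx
      exact hconst x 0 hx
  have hF0 : F 0 = 1 := tendsto_nhds_unique limF0 limF
  rw [hF, hcf₂, hcG₂] at hF0
  simp only [Gfun, Efun_zero, one_mul] at hF0
  exact hF0

lemma pair_zero {u₀ : ℝ → ℂ} {k k₂ : ℂ} {l : Filter ℝ} [hl : l.NeBot]
    (hdir : l = atTop ∨ l = atBot)
    (hk : (k^2).im = 0) (hkk : k₂^2 = k^2) (hk2 : k₂ = -k)
    {f g f₂ g₂ : ℝ → ℂ}
    (d1 : SolDataC u₀ k l f g) (d2 : SolDataC u₀ k₂ l f₂ g₂) :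
    f 0 * g₂ 0 + g 0 * f₂ 0 = 0 := by
  have hk₂ : (k₂^2).im = 0 := by rw [hkk]; exact hk
  obtain ⟨C1, hC1⟩ := d1.bdd
  obtain ⟨C2, hC2⟩ := d2.bdd
  have hbf : ∃ C, ∀ x, ‖f x‖ ≤ C := ⟨C1, fun x => (hC1 x).1⟩
  have hbf₂ : ∃ C, ∀ x, ‖f₂ x‖ ≤ C := ⟨C2, fun x => (hC2 x).1⟩
  have hbG : ∃ C, ∀ x, ‖Gfun k g x‖ ≤ C := ⟨C1, fun x => by
    show ‖_‖ ≤ _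
    rw [Gfun, norm_mul, abs_Efun hk, one_mul]; exact (hC1 x).2⟩
  have hbG₂ : ∃ C, ∀ x, ‖Gfun k₂ g₂ x‖ ≤ C := ⟨C2, fun x => by
    show ‖_‖ ≤ _
    rw [Gfun, norm_mul, abs_Efun hk₂, one_mul]; exact (hC2 x).2⟩
  have hcGf : Continuous (Gfun k g) :=
    (Complex.continuous_exp.comp ((continuous_const.mul Complex.continuous_ofReal).neg)).mul d1.contg
  have hcGf₂ : Continuous (Gfun k₂ g₂) :=
    (Complex.continuous_exp.comp ((continuous_const.mul Complex.continuous_ofReal).neg)).mul d2.contg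
  have hP1 := fun (a b : ℝ) (hab : a ≤ b) => prod_rule d1.intp d2.intP
    (int_mul_bdd d1.intp hcGf₂.aestronglyMeasurable hbG₂)
    (d2.intP.bdd_mul_old d1.contf.aestronglyMeasurable hbf)
    d1.repf d2.repG hab
  have hP2 := fun (a b : ℝ) (hab : a ≤ b) => prod_rule d1.intP d2.intp
    (int_mul_bdd d1.intP d2.contf.aestronglyMeasurable hbf₂)
    (d2.intp.bdd_mul_old hcGf.aestronglyMeasurable hbG)
    d1.repG d2.repf hab
  set F : ℝ → ℂ := fun x => f x * Gfun k₂ g₂ x + Gfun k g x * f₂ x with hF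
  have hconst : ∀ a b : ℝ, a ≤ b → F b = F a := by
    intro a b hab
    have e1 := hP1 a b hab
    have e2 := hP2 a b hab
    have hi1 : Integrable (fun t => pf u₀ k f g t * Gfun k₂ g₂ t + f t * pG u₀ k₂ f₂ g₂ t)
        (volume.restrict (Ioc a b)) :=
      ((int_mul_bdd d1.intp hcGf₂.aestronglyMeasurable hbG₂).add
        (d2.intP.bdd_mul_old d1.contf.aestronglyMeasurable hbf)).integrableOn
    have hi2 : Integrable (fun t => pG u₀ k f g t * f₂ t + Gfun k g t * pf u₀ k₂ f₂ g₂ t)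
        (volume.restrict (Ioc a b)) :=
      ((int_mul_bdd d1.intP d2.contf.aestronglyMeasurable hbf₂).add
        (d2.intp.bdd_mul_old hcGf.aestronglyMeasurable hbG)).integrableOn
    have comb : F b - F a = ∫ t in Ioc a b,
        ((pf u₀ k f g t * Gfun k₂ g₂ t + f t * pG u₀ k₂ f₂ g₂ t)
          + (pG u₀ k f g t * f₂ t + Gfun k g t * pf u₀ k₂ f₂ g₂ t)) := by
      rw [integral_add hi1 hi2, ← e1, ← e2, hF]
      ring
    rw [show (∫ t in Ioc a b,
        ((pf u₀ k f g t * Gfun k₂ g₂ t + f t * pG u₀ k₂ f₂ g₂ t)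
          + (pG u₀ k f g t * f₂ t + Gfun k g t * pf u₀ k₂ f₂ g₂ t))) = 0 from by
      rw [setIntegral_congr_fun measurableSet_Ioc
        (fun t _ => cancel_zero (u₀ := u₀) hkk hk2 f g f₂ g₂ t)]
      exact integral_zero _ _] at comb
    exact sub_eq_zero.mp comb
  have limF : Tendsto F l (nhds 0) := by
    have h0 : Tendsto F l (nhds (1 * 0 + 0 * 1)) :=
      (d1.limf.mul d2.limG).add (d1.limG.mul d2.limf)
    simpa using h0
  have limF0 : Tendsto F l (nhds (F 0)) := by
    rcases hdir with rfl | rfl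
    · refine tendsto_const_nhds.congr' ?_
      filter_upwards [eventually_ge_atTop (0:ℝ)] with x hx
      exact (hconst 0 x hx).symm
    · refine tendsto_const_nhds.congr' ?_
      filter_upwards [eventually_le_atBot (0:ℝ)] with x hx
      exact hconst x 0 hx
  have hF0 : F 0 = 0 := tendsto_nhds_unique limF0 limF
  rw [hF] at hF0
  simp only [Gfun, Efun_zero, one_mul] at hF0
  exact hF0

theorem stmt_12 (u₀ : ℝ → ℂ) (hu : MemHms 3 3 u₀)
    (ω11p ω21p ω11m ω21m : ℝ → ℂ → ℂ)
    (hp : ∀ k : ℂ, (k ^ 2).im ≤ 0 →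
      SolPlus u₀ k (fun x => ω11p x k) (fun x => ω21p x k))
    (hm : ∀ k : ℂ, 0 ≤ (k ^ 2).im →
      SolMinus u₀ k (fun x => ω11m x k) (fun x => ω21m x k)) :
    (∀ k ∈ SigmaSet, k ≠ 0 →
      acoef ω11p ω21p ω11m ω21m k
          * (starRingEnd ℂ) (acoef ω11p ω21p ω11m ω21m ((starRingEnd ℂ) k))
        + bcoef ω11p ω21p ω11m ω21m k
          * (starRingEnd ℂ) (bcoef ω11p ω21p ω11m ω21m ((starRingEnd ℂ) k)) = 1) ∧
    (∀ s : ℝ, s ≠ 0 →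
      ‖acoef ω11p ω21p ω11m ω21m (s : ℂ)‖ ^ 2
        + ‖bcoef ω11p ω21p ω11m ω21m (s : ℂ)‖ ^ 2 = 1) ∧
    (∀ s : ℝ, s ≠ 0 →
      ‖acoef ω11p ω21p ω11m ω21m (Complex.I * s)‖ ^ 2
        - ‖bcoef ω11p ω21p ω11m ω21m (Complex.I * s)‖ ^ 2 = 1) := by
  have dP : ∀ κ : ℂ, (κ^2).im = 0 →
      SolDataC u₀ κ atTop (fun x => ω11p x κ) (fun x => ω21p x κ) :=
    fun κ hκ => data_plus hu hκ (hp κ (le_of_eq hκ))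
  have dM : ∀ κ : ℂ, (κ^2).im = 0 →
      SolDataC u₀ κ atBot (fun x => ω11m x κ) (fun x => ω21m x κ) :=
    fun κ hκ => data_minus hu hκ (hm κ (ge_of_eq hκ))
  have Wp : ∀ k : ℂ, (k^2).im = 0 →
      ω11p 0 k * (starRingEnd ℂ) (ω11p 0 ((starRingEnd ℂ) k))
        + ω21p 0 k * (starRingEnd ℂ) (ω21p 0 ((starRingEnd ℂ) k)) = 1 := by
    intro k hk
    have hkk : ((starRingEnd ℂ) k)^2 = k^2 := by
      rw [← map_pow]; exact Complex.conj_eq_iff_im.mpr hk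
    have h := pair_conj (u₀ := u₀) (Or.inl rfl) hk hkk (one_pow 2)
      (by rw [Complex.conj_conj, one_mul])
      (dP k hk) (dP ((starRingEnd ℂ) k) (by rw [hkk]; exact hk))
    simpa using h
  have Wm : ∀ k : ℂ, (k^2).im = 0 →
      ω11m 0 k * (starRingEnd ℂ) (ω11m 0 ((starRingEnd ℂ) k))
        + ω21m 0 k * (starRingEnd ℂ) (ω21m 0 ((starRingEnd ℂ) k)) = 1 := by
    intro k hk
    have hkk : ((starRingEnd ℂ) k)^2 = k^2 := by
      rw [← map_pow]; exact Complex.conj_eq_iff_im.mpr hk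
    have h := pair_conj (u₀ := u₀) (Or.inr rfl) hk hkk (one_pow 2)
      (by rw [Complex.conj_conj, one_mul])
      (dM k hk) (dM ((starRingEnd ℂ) k) (by rw [hkk]; exact hk))
    simpa using h
  have WpSelf : ∀ k : ℂ, (k^2).im = 0 → (starRingEnd ℂ) k = -k →
      ω11p 0 k * (starRingEnd ℂ) (ω11p 0 k) - ω21p 0 k * (starRingEnd ℂ) (ω21p 0 k) = 1 := by
    intro k hk hck
    have h := pair_conj (u₀ := u₀) (Or.inl rfl) hk rfl
      (by norm_num : ((-1 : ℂ))^2 = 1) (by rw [hck]; ring)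
      (dP k hk) (dP k hk)
    linear_combination h
  have WmSelf : ∀ k : ℂ, (k^2).im = 0 → (starRingEnd ℂ) k = -k →
      ω11m 0 k * (starRingEnd ℂ) (ω11m 0 k) - ω21m 0 k * (starRingEnd ℂ) (ω21m 0 k) = 1 := by
    intro k hk hck
    have h := pair_conj (u₀ := u₀) (Or.inr rfl) hk rfl
      (by norm_num : ((-1 : ℂ))^2 = 1) (by rw [hck]; ring)
      (dM k hk) (dM k hk)
    linear_combination h
  have Zm : ∀ k : ℂ, (k^2).im = 0 →
      ω11m 0 k * ω21m 0 (-k) + ω21m 0 k * ω11m 0 (-k) = 0 := by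
    intro k hk
    have hnk : ((-k : ℂ)^2).im = 0 := by rw [show (-k:ℂ)^2 = k^2 from by ring]; exact hk
    have h := pair_zero (u₀ := u₀) (Or.inr rfl) hk
      (show (-k:ℂ)^2 = k^2 from by ring) rfl
      (dM k hk) (dM (-k) hnk)
    simpa using h
  have part1 : ∀ k : ℂ, (k^2).im = 0 →
      acoef ω11p ω21p ω11m ω21m k
          * (starRingEnd ℂ) (acoef ω11p ω21p ω11m ω21m ((starRingEnd ℂ) k))
        + bcoef ω11p ω21p ω11m ω21m k
          * (starRingEnd ℂ) (bcoef ω11p ω21p ω11m ω21m ((starRingEnd ℂ) k)) = 1 := by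
    intro k hk
    have hWp := Wp k hk
    have hWm := Wm k hk
    simp only [acoef, bcoef, map_add, map_sub, map_mul, Complex.conj_conj]
    linear_combination (ω11p 0 k * (starRingEnd ℂ) (ω11p 0 ((starRingEnd ℂ) k))
      + ω21p 0 k * (starRingEnd ℂ) (ω21p 0 ((starRingEnd ℂ) k))) * hWm + hWp
  refine ⟨fun k hk _ => part1 k hk, fun s hs => ?_, fun s hs => ?_⟩
  · -- real axis
    have hs2 : (((s:ℂ))^2).im = 0 := by
      rw [← Complex.ofReal_pow]; exact Complex.ofReal_im _
    have h := part1 (s:ℂ) hs2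
    rw [Complex.conj_ofReal] at h
    rw [Complex.mul_conj, Complex.mul_conj] at h
    rw [Complex.sq_norm, Complex.sq_norm]
    exact_mod_cast h
  · -- imaginary axis
    set k : ℂ := Complex.I * (s:ℂ) with hkdef
    have hsq : k^2 = ((-(s^2) : ℝ) : ℂ) := by
      rw [hkdef]; push_cast
      rw [mul_pow, Complex.I_sq]; ring
    have hk3 : (k^2).im = 0 := by rw [hsq]; exact Complex.ofReal_im _
    have hck : (starRingEnd ℂ) k = -k := by
      rw [hkdef, map_mul, Complex.conj_I, Complex.conj_ofReal]; ring
    have hnk : ((-k : ℂ)^2).im = 0 := by rw [show (-k:ℂ)^2 = k^2 from by ring]; exact hk3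
    have hcnk : (starRingEnd ℂ) (-k) = -(-k) := by rw [map_neg, hck, neg_neg]
    have R1 := Wm k hk3
    rw [hck] at R1
    have R1c : (starRingEnd ℂ) (ω11m 0 k) * ω11m 0 (-k)
        + (starRingEnd ℂ) (ω21m 0 k) * ω21m 0 (-k) = 1 := by
      have h := congrArg (starRingEnd ℂ) R1
      simpa using h
    have R2 := Zm k hk3
    have R5 := WmSelf k hk3 hck
    have R6 := WpSelf (-k) hnk hcnk
    have hD := R5
    have hA2 : ω11m 0 (-k) = ω11m 0 k := by
      linear_combination (ω11m 0 k) * R1c - ((starRingEnd ℂ) (ω21m 0 k)) * R2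
        - (ω11m 0 (-k)) * hD
    have hB2 : ω21m 0 (-k) = -(ω21m 0 k) := by
      linear_combination (-(ω21m 0 k)) * R1c + ((starRingEnd ℂ) (ω11m 0 k)) * R2
        - (ω21m 0 (-k)) * hD
    have T : acoef ω11p ω21p ω11m ω21m k * (starRingEnd ℂ) (acoef ω11p ω21p ω11m ω21m k)
        - bcoef ω11p ω21p ω11m ω21m k * (starRingEnd ℂ) (bcoef ω11p ω21p ω11m ω21m k) = 1 := by
      simp only [acoef, bcoef, map_add, map_sub, map_mul, Complex.conj_conj, hck, hA2, hB2,
        map_neg]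
      linear_combination (ω11p 0 (-k) * (starRingEnd ℂ) (ω11p 0 (-k))
        - ω21p 0 (-k) * (starRingEnd ℂ) (ω21p 0 (-k))) * hD + R6
    rw [Complex.mul_conj, Complex.mul_conj] at T
    rw [Complex.sq_norm, Complex.sq_norm]
    exact_mod_cast T

end
end

section
/- Let α, β > 0 and ξ > 0, set k₀ = (αβ²/(4ξ))^{1/4}, and define θ(k) = ξ k² − αβ + αβ²/(4k²) for k ∈ ℂ \ {0}. Then: (i) for every k ∈ ℂ \ {0}, Im θ(k) = (αβ²/4) · Im(k²) · (1/k₀⁴ − 1/|k|⁴), so that |e^{−2itθ(k)}| = exp((t/2) αβ² Im(k²)(1/k₀⁴ − 1/|k|⁴)) for t ∈ ℝ; (ii) for every t ≥ 0 and every k ∈ ℂ \ {0} with |k| ≤ k₀/√2 and Im(k²) ≥ k₀²/4, one has |e^{−2itθ(k)}| ≤ exp(−3αβ² t/(8k₀²)). -/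
open Complex

noncomputable section

/-- The phase function `θ(k) = ξk² − αβ + αβ²/(4k²)`. -/
def theta (α β ξ : ℝ) (k : ℂ) : ℂ :=
  (ξ : ℂ) * k ^ 2 - (α : ℂ) * β + (α : ℂ) * (β : ℂ) ^ 2 / (4 * k ^ 2)

theorem stmt_17 (α β ξ : ℝ) (hα : 0 < α) (hβ : 0 < β) (hξ : 0 < ξ)
    (k₀ : ℝ) (hk₀ : k₀ = (α * β ^ 2 / (4 * ξ)) ^ ((1 : ℝ) / 4)) :
    -- (i)
    (∀ k : ℂ, k ≠ 0 →
      (theta α β ξ k).im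
        = (α * β ^ 2 / 4) * (k ^ 2).im * (1 / k₀ ^ 4 - 1 / ‖k‖ ^ 4) ∧
      ∀ t : ℝ,
        ‖Complex.exp (-2 * Complex.I * (t : ℂ) * theta α β ξ k)‖
          = Real.exp ((t / 2) * α * β ^ 2 * (k ^ 2).im
              * (1 / k₀ ^ 4 - 1 / ‖k‖ ^ 4))) ∧
    -- (ii)
    (∀ t : ℝ, 0 ≤ t → ∀ k : ℂ, k ≠ 0 →
      ‖k‖ ≤ k₀ / Real.sqrt 2 → k₀ ^ 2 / 4 ≤ (k ^ 2).im →
      ‖Complex.exp (-2 * Complex.I * (t : ℂ) * theta α β ξ k)‖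
        ≤ Real.exp (-3 * α * β ^ 2 * t / (8 * k₀ ^ 2))) := by
  have hx : 0 < α * β ^ 2 / (4 * ξ) := by positivity
  have hk₀pos : 0 < k₀ := by rw [hk₀]; positivity
  have hk4 : k₀ ^ 4 = α * β ^ 2 / (4 * ξ) := by
    rw [hk₀, ← Real.rpow_natCast _ 4, ← Real.rpow_mul hx.le]
    norm_num
  have hξeq : ξ = α * β ^ 2 / (4 * k₀ ^ 4) := by
    have h4 : k₀ ^ 4 ≠ 0 := by positivity
    field_simp at hk4 ⊢
    linarith [hk4]
  -- part (i)
  have main : ∀ k : ℂ, k ≠ 0 →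
      (theta α β ξ k).im
        = (α * β ^ 2 / 4) * (k ^ 2).im * (1 / k₀ ^ 4 - 1 / ‖k‖ ^ 4) := by
    intro k hk
    have hz : (k ^ 2 : ℂ) ≠ 0 := pow_ne_zero 2 hk
    have hnsq : Complex.normSq (k ^ 2) = ‖k‖ ^ 4 := by
      rw [← Complex.sq_norm, norm_pow]; ring
    have habs : ‖k‖ ≠ 0 := norm_ne_zero_iff.mpr hk
    have h1 : ((α : ℂ) * ((β ^ 2 : ℝ) : ℂ) / (4 * k ^ 2)) =
        ((α * β ^ 2 / 4 : ℝ) : ℂ) * (k ^ 2)⁻¹ := by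
      push_cast; field_simp
    have him : (theta α β ξ k).im =
        ξ * (k ^ 2).im + (α * β ^ 2 / 4) * (-(k ^ 2).im / Complex.normSq (k ^ 2)) := by
      simp [theta, h1, Complex.add_im, Complex.sub_im, Complex.im_ofReal_mul,
        Complex.inv_im, ← Complex.ofReal_pow]
    rw [him, hnsq, hξeq]
    have h4 : (k₀ : ℝ) ^ 4 ≠ 0 := by positivity
    have h5 : ‖k‖ ^ 4 ≠ 0 := by positivity
    field_simp
    ring
  have absexp : ∀ (t : ℝ) (k : ℂ),
      ‖Complex.exp (-2 * Complex.I * (t : ℂ) * theta α β ξ k)‖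
        = Real.exp (2 * t * (theta α β ξ k).im) := by
    intro t k
    rw [Complex.norm_exp]
    congr 1
    have : (-2 * Complex.I * (t : ℂ) * theta α β ξ k).re
        = 2 * t * (theta α β ξ k).im := by
      simp [Complex.mul_re, Complex.mul_im]
      try ring
    exact this
  constructor
  · intro k hk
    refine ⟨main k hk, fun t => ?_⟩
    rw [absexp, main k hk]
    congr 1
    ring
  · intro t ht k hk habs him
    rw [absexp, main k hk]
    rw [Real.exp_le_exp]
    have habs0 : 0 < ‖k‖ := norm_pos_iff.mpr hk
    have hs2 : (0:ℝ) < Real.sqrt 2 := by positivity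
    have h4 : ‖k‖ ^ 4 ≤ k₀ ^ 4 / 4 := by
      have h := pow_le_pow_left₀ habs0.le habs 4
      have : (k₀ / Real.sqrt 2) ^ 4 = k₀ ^ 4 / 4 := by
        rw [div_pow]
        congr 1
        rw [show (4:ℕ) = 2 * 2 by rfl, pow_mul, Real.sq_sqrt (by norm_num : (0:ℝ) ≤ 2)]
        norm_num
      linarith [h, this ▸ h]
    have hinv : 4 / k₀ ^ 4 ≤ 1 / ‖k‖ ^ 4 := by
      rw [div_le_div_iff₀ (by positivity) (by positivity)]
      nlinarith
    have hD : 1 / k₀ ^ 4 - 1 / ‖k‖ ^ 4 ≤ -3 / k₀ ^ 4 := by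
      have e : (-3:ℝ) / k₀ ^ 4 = 1 / k₀ ^ 4 - 4 / k₀ ^ 4 := by ring
      linarith
    have hA : (0:ℝ) < k₀ ^ 2 / 4 := by positivity
    have hk02 : (0:ℝ) < k₀ ^ 2 := by positivity
    have key : (k ^ 2).im * (1 / k₀ ^ 4 - 1 / ‖k‖ ^ 4)
        ≤ -3 / (4 * k₀ ^ 2) := by
      have hDneg : 1 / k₀ ^ 4 - 1 / ‖k‖ ^ 4 ≤ 0 := by
        have h3 : (-3:ℝ) / k₀ ^ 4 ≤ 0 := by
          apply div_nonpos_of_nonpos_of_nonneg <;> [norm_num; positivity]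
        linarith
      have step1 : (k ^ 2).im * (1 / k₀ ^ 4 - 1 / ‖k‖ ^ 4)
          ≤ (k₀ ^ 2 / 4) * (1 / k₀ ^ 4 - 1 / ‖k‖ ^ 4) :=
        mul_le_mul_of_nonpos_right him hDneg
      have step2 : (k₀ ^ 2 / 4) * (1 / k₀ ^ 4 - 1 / ‖k‖ ^ 4)
          ≤ (k₀ ^ 2 / 4) * (-3 / k₀ ^ 4) :=
        mul_le_mul_of_nonneg_left hD (by positivity)
      have : (k₀ ^ 2 / 4) * (-3 / k₀ ^ 4) = -3 / (4 * k₀ ^ 2) := by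
        field_simp
      linarith [this ▸ step2]
    have hc : (0:ℝ) ≤ 2 * t * (α * β ^ 2 / 4) := by positivity
    calc 2 * t * ((α * β ^ 2 / 4) * (k ^ 2).im * (1 / k₀ ^ 4 - 1 / ‖k‖ ^ 4))
        = (2 * t * (α * β ^ 2 / 4)) * ((k ^ 2).im * (1 / k₀ ^ 4 - 1 / ‖k‖ ^ 4)) := by ring
      _ ≤ (2 * t * (α * β ^ 2 / 4)) * (-3 / (4 * k₀ ^ 2)) :=
        mul_le_mul_of_nonneg_left key hc
      _ = -3 * α * β ^ 2 * t / (8 * k₀ ^ 2) := by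
        field_simp
        ring

end
end

section
/- Let I be a measurable subset of a measure space, h : ℝ⁺ → [0,∞) measurable, and K : ℝ⁺ × ℝ⁺ × I → ℂ a measurable kernel such that K(x,y,k) = 0 whenever x > y and sup_{k ∈ I} |K(x,y,k)| ≤ h(y) for all x ≤ y. Define (T f)(x,k) = ∫_x^∞ K(x,y,k) f(y,k) dy. Then for every f ∈ L²(ℝ⁺ × I): (i) ‖T f‖_{L²(ℝ⁺ × I)} ≤ (∫_0^∞ y h(y)² dy)^{1/2} ‖f‖_{L²(ℝ⁺ × I)}; (ii) sup_{x ≥ 0} ‖(T f)(x, ·)‖_{L²(I)} ≤ (∫_0^∞ h(y)² dy)^{1/2} ‖f‖_{L²(ℝ⁺ × I)} (whenever the right-hand sides are finite). -/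
open MeasureTheory Complex Set
open scoped ENNReal

noncomputable section

lemma cs_aux {α : Type*} [MeasurableSpace α] {ν : Measure α} {a b : α → ℝ}
    (ha0 : 0 ≤ᵐ[ν] a) (hb0 : 0 ≤ᵐ[ν] b) (ha : MemLp a 2 ν) (hb : MemLp b 2 ν) :
    ∫ x, a x * b x ∂ν ≤ Real.sqrt (∫ x, a x ^ 2 ∂ν) * Real.sqrt (∫ x, b x ^ 2 ∂ν) := by
  have h22 : (2:ℝ).HolderConjugate 2 := ⟨by norm_num, by norm_num, by norm_num⟩
  have h2 : ENNReal.ofReal (2:ℝ) = 2 := by norm_num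
  have H := integral_mul_le_Lp_mul_Lq_of_nonneg h22 ha0 hb0 (h2 ▸ ha) (h2 ▸ hb)
  have ea : ∀ u : α → ℝ, (∫ x, u x ^ (2:ℝ) ∂ν) = ∫ x, u x ^ 2 ∂ν := fun u =>
    integral_congr_ae (Filter.Eventually.of_forall fun x => by
      show u x ^ (2:ℝ) = u x ^ (2:ℕ)
      rw [show (2:ℝ) = ((2:ℕ):ℝ) by norm_num, Real.rpow_natCast])
  rw [ea, ea] at H
  calc ∫ x, a x * b x ∂ν ≤ (∫ x, a x ^ 2 ∂ν) ^ (1/2 : ℝ) * (∫ x, b x ^ 2 ∂ν) ^ (1/2 : ℝ) := H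
    _ = _ := by rw [← Real.sqrt_eq_rpow, ← Real.sqrt_eq_rpow]

theorem stmt_18 {I : Type*} [MeasurableSpace I] (μ : Measure I) [SigmaFinite μ]
    (h : ℝ → ℝ) (hmeas : Measurable h) (hnonneg : ∀ y : ℝ, 0 ≤ h y)
    (K : ℝ → ℝ → I → ℂ)
    (hKmeas : Measurable (fun p : ℝ × ℝ × I => K p.1 p.2.1 p.2.2))
    (hK0 : ∀ (x y : ℝ) (k : I), y < x → K x y k = 0)
    (hKbd : ∀ x y : ℝ, x ≤ y → ∀ k : I, ‖K x y k‖ ≤ h y)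
    (hh2 : IntegrableOn (fun y : ℝ => h y ^ 2) (Ioi 0) volume)
    (hyh2 : IntegrableOn (fun y : ℝ => y * h y ^ 2) (Ioi 0) volume)
    (f : ℝ → I → ℂ)
    (hfmeas : Measurable (fun p : ℝ × I => f p.1 p.2))
    (hf : Integrable (fun p : ℝ × I => ‖f p.1 p.2‖ ^ 2)
      ((volume.restrict (Ioi (0 : ℝ))).prod μ)) :
    -- (i) the `L²(ℝ⁺ × I)` bound
    Real.sqrt (∫ p : ℝ × I,
        ‖∫ y in Ioi p.1, K p.1 y p.2 * f y p.2‖ ^ 2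
        ∂((volume.restrict (Ioi (0 : ℝ))).prod μ))
      ≤ Real.sqrt (∫ y in Ioi (0 : ℝ), y * h y ^ 2)
        * Real.sqrt (∫ p : ℝ × I, ‖f p.1 p.2‖ ^ 2
            ∂((volume.restrict (Ioi (0 : ℝ))).prod μ)) ∧
    -- (ii) the `C⁰(ℝ⁺, L²(I))` bound
    ∀ x : ℝ, 0 ≤ x →
      Real.sqrt (∫ k, ‖∫ y in Ioi x, K x y k * f y k‖ ^ 2 ∂μ)
        ≤ Real.sqrt (∫ y in Ioi (0 : ℝ), h y ^ 2)
          * Real.sqrt (∫ p : ℝ × I, ‖f p.1 p.2‖ ^ 2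
              ∂((volume.restrict (Ioi (0 : ℝ))).prod μ)) := by
  set ν : Measure ℝ := volume.restrict (Ioi (0:ℝ)) with hνdef
  set N2 : ℝ := ∫ p : ℝ × I, ‖f p.1 p.2‖ ^ 2 ∂(ν.prod μ) with hN2def
  have hN2 : (0:ℝ) ≤ N2 := integral_nonneg fun p => sq_nonneg _
  have hA : (0:ℝ) ≤ ∫ y in Ioi (0:ℝ), h y ^ 2 :=
    setIntegral_nonneg measurableSet_Ioi fun y _ => sq_nonneg _
  have hB : (0:ℝ) ≤ ∫ y in Ioi (0:ℝ), y * h y ^ 2 :=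
    setIntegral_nonneg measurableSet_Ioi fun y hy => mul_nonneg (le_of_lt hy) (sq_nonneg _)
  -- a.e. k integrability of the square of f
  have hgood : ∀ᵐ k ∂μ, IntegrableOn (fun y => ‖f y k‖ ^ 2) (Ioi (0:ℝ)) volume :=
    hf.swap.prod_right_ae
  -- the function ψ
  set ψ : I → ℝ := fun k => ∫ y in Ioi (0:ℝ), ‖f y k‖ ^ 2 with hψdef
  have hψnn : ∀ k, 0 ≤ ψ k := fun k => setIntegral_nonneg measurableSet_Ioi fun y _ => sq_nonneg _
  have hψint : Integrable ψ μ := hf.integral_prod_right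
  have hswap : N2 = ∫ k, ψ k ∂μ := integral_prod_symm _ hf
  -- key pointwise estimate
  have key : ∀ x : ℝ, 0 ≤ x → ∀ k : I,
      IntegrableOn (fun y => ‖f y k‖ ^ 2) (Ioi (0:ℝ)) volume →
      ‖∫ y in Ioi x, K x y k * f y k‖ ^ 2
        ≤ (∫ y in Ioi x, h y ^ 2) * ψ k := by
    intro x hx k hk
    have hsub : Ioi x ⊆ Ioi (0:ℝ) := Ioi_subset_Ioi hx
    have hb2 : IntegrableOn (fun y => ‖f y k‖ ^ 2) (Ioi x) volume := hk.mono_set hsub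
    have ha2 : IntegrableOn (fun y : ℝ => h y ^ 2) (Ioi x) volume := hh2.mono_set hsub
    have hbmeas : Measurable fun y => ‖f y k‖ := by
      have : Measurable fun y => f y k := hfmeas.comp (measurable_id.prodMk measurable_const)
      exact this.norm
    have haM : MemLp h 2 (volume.restrict (Ioi x)) :=
      (memLp_two_iff_integrable_sq hmeas.aestronglyMeasurable).2 ha2
    have hbM : MemLp (fun y => ‖f y k‖) 2 (volume.restrict (Ioi x)) :=
      (memLp_two_iff_integrable_sq hbmeas.aestronglyMeasurable).2 hb2
    have hmul : Integrable (fun y => h y * ‖f y k‖) (volume.restrict (Ioi x)) := by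
      have := hbM.smul (r := 1) haM (hpqr := ⟨by rw [inv_one]; exact ENNReal.inv_two_add_inv_two⟩)
      exact memLp_one_iff_integrable.1 (by simpa [Pi.smul_apply, smul_eq_mul, Pi.mul_def] using this)
    have h1 : ‖∫ y in Ioi x, K x y k * f y k‖
        ≤ ∫ y in Ioi x, h y * ‖f y k‖ := by
      calc ‖∫ y in Ioi x, K x y k * f y k‖
          = ‖∫ y in Ioi x, K x y k * f y k‖ := rfl
        _ ≤ ∫ y in Ioi x, ‖K x y k * f y k‖ := norm_integral_le_integral_norm _
        _ ≤ ∫ y in Ioi x, h y * ‖f y k‖ := by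
            refine integral_mono_of_nonneg
              (Filter.Eventually.of_forall fun y => norm_nonneg _) hmul ?_
            filter_upwards [ae_restrict_mem measurableSet_Ioi] with y hy
            rw [norm_mul]
            exact mul_le_mul_of_nonneg_right (hKbd x y (le_of_lt hy) k) (norm_nonneg _)
    have h2 := cs_aux (Filter.Eventually.of_forall hnonneg)
      (Filter.Eventually.of_forall fun y => norm_nonneg _) haM hbM
    have hbmono : (∫ y in Ioi x, ‖f y k‖ ^ 2) ≤ ψ k :=
      setIntegral_mono_set hk (Filter.Eventually.of_forall fun y => sq_nonneg _)
        (HasSubset.Subset.eventuallyLE hsub)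
    have hAx : (0:ℝ) ≤ ∫ y in Ioi x, h y ^ 2 :=
      setIntegral_nonneg measurableSet_Ioi fun y _ => sq_nonneg _
    have hBx : (0:ℝ) ≤ ∫ y in Ioi x, ‖f y k‖ ^ 2 :=
      setIntegral_nonneg measurableSet_Ioi fun y _ => sq_nonneg _
    calc ‖∫ y in Ioi x, K x y k * f y k‖ ^ 2
        ≤ (∫ y in Ioi x, h y * ‖f y k‖) ^ 2 :=
          pow_le_pow_left₀ (norm_nonneg _) h1 2
      _ ≤ (Real.sqrt (∫ y in Ioi x, h y ^ 2)
            * Real.sqrt (∫ y in Ioi x, ‖f y k‖ ^ 2)) ^ 2 := by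
          refine pow_le_pow_left₀ ?_ h2 2
          exact integral_nonneg fun y => mul_nonneg (hnonneg y) (norm_nonneg _)
      _ = (∫ y in Ioi x, h y ^ 2) * ∫ y in Ioi x, ‖f y k‖ ^ 2 := by
          rw [mul_pow, Real.sq_sqrt hAx, Real.sq_sqrt hBx]
      _ ≤ (∫ y in Ioi x, h y ^ 2) * ψ k := mul_le_mul_of_nonneg_left hbmono hAx
  constructor
  · -- part (i)
    set φ : ℝ → ℝ := fun x => ∫ y in Ioi (max x 0), h y ^ 2 with hφdef
    have hφanti : Antitone φ := by
      intro x1 x2 h12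
      exact setIntegral_mono_set (hh2.mono_set (Ioi_subset_Ioi (le_max_right x1 0)))
        (Filter.Eventually.of_forall fun y => sq_nonneg _)
        (HasSubset.Subset.eventuallyLE (Ioi_subset_Ioi (max_le_max h12 le_rfl)))
    have hφnn : ∀ x, 0 ≤ φ x := fun x =>
      setIntegral_nonneg measurableSet_Ioi fun y _ => sq_nonneg _
    have hφmeas : Measurable φ := hφanti.measurable
    -- the lintegral computation (Fubini–Tonelli)
    have hlin : (∫⁻ x in Ioi (0:ℝ), ENNReal.ofReal (φ x))
        = ∫⁻ y in Ioi (0:ℝ), ENNReal.ofReal (y * h y ^ 2) := by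
      set H : ℝ → ℝ≥0∞ := fun y => ENNReal.ofReal (h y ^ 2) with hHdef
      have hHmeas : Measurable H := ENNReal.measurable_ofReal.comp (hmeas.pow_const 2)
      have step1 : (∫⁻ x in Ioi (0:ℝ), ENNReal.ofReal (φ x))
          = ∫⁻ x in Ioi (0:ℝ), ∫⁻ y in Ioi (0:ℝ), (Ioi x).indicator H y := by
        refine setLIntegral_congr_fun measurableSet_Ioi ?_
        intro x hx
        have hx' : (0:ℝ) < x := hx
        have e1 : ENNReal.ofReal (φ x) = ∫⁻ y in Ioi x, H y ∂volume := by
          rw [hφdef]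
          simp only [max_eq_left hx'.le]
          exact ofReal_integral_eq_lintegral_ofReal (hh2.mono_set (Ioi_subset_Ioi hx'.le))
            (Filter.Eventually.of_forall fun y => sq_nonneg _)
        dsimp only
        rw [e1, lintegral_indicator measurableSet_Ioi _, Measure.restrict_restrict measurableSet_Ioi,
          inter_eq_left.2 (Ioi_subset_Ioi hx'.le)]
      rw [step1, lintegral_lintegral_swap]
      · refine setLIntegral_congr_fun measurableSet_Ioi ?_
        intro y hy
        have hy' : (0:ℝ) < y := hy
        have e2 : ∀ x : ℝ, (Ioi x).indicator H y = (Iio y).indicator (fun _ => H y) x := by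
          intro x
          by_cases hxy : x < y
          · rw [indicator_of_mem (mem_Ioi.2 hxy), indicator_of_mem (mem_Iio.2 hxy)]
          · rw [indicator_of_notMem (by simpa [mem_Ioi] using hxy),
              indicator_of_notMem (by simpa [mem_Iio] using hxy)]
        calc (∫⁻ x in Ioi (0:ℝ), (Ioi x).indicator H y)
            = ∫⁻ x in Ioi (0:ℝ), (Iio y).indicator (fun _ => H y) x := by
              exact lintegral_congr fun x => e2 x
          _ = ∫⁻ _ in Iio y, H y ∂ν := lintegral_indicator measurableSet_Iio _
          _ = H y * volume (Iio y ∩ Ioi 0) := by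
              rw [hνdef, Measure.restrict_restrict measurableSet_Iio, setLIntegral_const]
          _ = ENNReal.ofReal (y * h y ^ 2) := by
              rw [show Iio y ∩ Ioi (0:ℝ) = Ioo 0 y by rw [inter_comm, Ioi_inter_Iio],
                Real.volume_Ioo, hHdef]
              rw [← ENNReal.ofReal_mul (sq_nonneg _)]
              ring_nf
      · -- AEMeasurable of the uncurried function
        have : (fun p : ℝ × ℝ => (Ioi p.1).indicator H p.2)
            = fun p : ℝ × ℝ => if p.1 < p.2 then H p.2 else 0 := by
          funext p
          by_cases hp : p.1 < p.2
          · rw [indicator_of_mem (mem_Ioi.2 hp), if_pos hp]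
          · rw [indicator_of_notMem (by simpa [mem_Ioi] using hp), if_neg hp]
        rw [show Function.uncurry (fun x y => (Ioi x).indicator H y)
            = fun p : ℝ × ℝ => (Ioi p.1).indicator H p.2 from rfl, this]
        exact (Measurable.ite (measurableSet_lt measurable_fst measurable_snd)
          (hHmeas.comp measurable_snd) measurable_const).aemeasurable
    -- integrability of φ on Ioi 0
    have hφint : IntegrableOn φ (Ioi (0:ℝ)) volume := by
      refine ⟨hφmeas.aestronglyMeasurable, ?_⟩
      rw [hasFiniteIntegral_iff_norm]
      have e : (∫⁻ x in Ioi (0:ℝ), ENNReal.ofReal ‖φ x‖)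
          = ∫⁻ x in Ioi (0:ℝ), ENNReal.ofReal (φ x) :=
        lintegral_congr fun x => by rw [Real.norm_of_nonneg (hφnn x)]
      rw [e, hlin]
      calc (∫⁻ y in Ioi (0:ℝ), ENNReal.ofReal (y * h y ^ 2))
          ≤ ∫⁻ y in Ioi (0:ℝ), ‖y * h y ^ 2‖ₑ := by
            refine lintegral_mono fun y => ?_
            rw [← ofReal_norm]
            exact ENNReal.ofReal_le_ofReal (le_abs_self _)
        _ < ⊤ := hyh2.2
    -- value of the integral of φ
    have hφval : (∫ x in Ioi (0:ℝ), φ x) = ∫ y in Ioi (0:ℝ), y * h y ^ 2 := by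
      have e1 : ENNReal.ofReal (∫ x in Ioi (0:ℝ), φ x)
          = ∫⁻ x in Ioi (0:ℝ), ENNReal.ofReal (φ x) :=
        ofReal_integral_eq_lintegral_ofReal hφint (Filter.Eventually.of_forall hφnn)
      have e2 : ENNReal.ofReal (∫ y in Ioi (0:ℝ), y * h y ^ 2)
          = ∫⁻ y in Ioi (0:ℝ), ENNReal.ofReal (y * h y ^ 2) :=
        ofReal_integral_eq_lintegral_ofReal hyh2
          ((ae_restrict_mem measurableSet_Ioi).mono fun y hy =>
            mul_nonneg (le_of_lt hy) (sq_nonneg _))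
      have := e1.trans (hlin.trans e2.symm)
      exact (ENNReal.ofReal_eq_ofReal_iff
        (setIntegral_nonneg measurableSet_Ioi fun x _ => hφnn x) hB).1 this
    -- a.e. bounds on the product space
    have h1 : ∀ᵐ p : ℝ × I ∂(ν.prod μ), p.1 ∈ Ioi (0:ℝ) :=
      Measure.quasiMeasurePreserving_fst.ae (ae_restrict_mem measurableSet_Ioi)
    have h2 : ∀ᵐ p : ℝ × I ∂(ν.prod μ),
        IntegrableOn (fun y => ‖f y p.2‖ ^ 2) (Ioi (0:ℝ)) volume :=
      Measure.quasiMeasurePreserving_snd.ae hgood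
    have hmain : (∫ p : ℝ × I, ‖∫ y in Ioi p.1, K p.1 y p.2 * f y p.2‖ ^ 2
          ∂(ν.prod μ)) ≤ ∫ p : ℝ × I, φ p.1 * ψ p.2 ∂(ν.prod μ) := by
      refine integral_mono_of_nonneg (Filter.Eventually.of_forall fun p => sq_nonneg _)
        (hφint.mul_prod hψint) ?_
      filter_upwards [h1, h2] with p hp1 hp2
      have hkey := key p.1 (le_of_lt hp1) p.2 hp2
      have : φ p.1 = ∫ y in Ioi p.1, h y ^ 2 := by
        rw [hφdef]; simp only [max_eq_left (le_of_lt (mem_Ioi.1 hp1))]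
      rw [this]
      exact hkey
    have hprod : (∫ p : ℝ × I, φ p.1 * ψ p.2 ∂(ν.prod μ))
        = (∫ x in Ioi (0:ℝ), φ x) * ∫ k, ψ k ∂μ := integral_prod_mul φ ψ
    calc Real.sqrt (∫ p : ℝ × I, ‖∫ y in Ioi p.1, K p.1 y p.2 * f y p.2‖ ^ 2
          ∂(ν.prod μ))
        ≤ Real.sqrt ((∫ y in Ioi (0:ℝ), y * h y ^ 2) * N2) := by
          apply Real.sqrt_le_sqrt
          rw [hswap]
          calc _ ≤ ∫ p : ℝ × I, φ p.1 * ψ p.2 ∂(ν.prod μ) := hmain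
            _ = _ := by rw [hprod, hφval]
      _ = Real.sqrt (∫ y in Ioi (0:ℝ), y * h y ^ 2) * Real.sqrt N2 := Real.sqrt_mul hB _
  · -- part (ii)
    intro x hx
    have hAx : (∫ y in Ioi x, h y ^ 2) ≤ ∫ y in Ioi (0:ℝ), h y ^ 2 :=
      setIntegral_mono_set hh2 (Filter.Eventually.of_forall fun y => sq_nonneg _)
        (HasSubset.Subset.eventuallyLE (Ioi_subset_Ioi hx))
    have hle : (∫ k, ‖∫ y in Ioi x, K x y k * f y k‖ ^ 2 ∂μ)
        ≤ ∫ k, (∫ y in Ioi (0:ℝ), h y ^ 2) * ψ k ∂μ := by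
      refine integral_mono_of_nonneg (Filter.Eventually.of_forall fun k => sq_nonneg _)
        (hψint.const_mul _) ?_
      filter_upwards [hgood] with k hk
      exact (key x hx k hk).trans (mul_le_mul_of_nonneg_right hAx (hψnn k))
    calc Real.sqrt (∫ k, ‖∫ y in Ioi x, K x y k * f y k‖ ^ 2 ∂μ)
        ≤ Real.sqrt ((∫ y in Ioi (0:ℝ), h y ^ 2) * N2) := by
          apply Real.sqrt_le_sqrt
          rw [hswap, ← integral_const_mul]
          exact hle
      _ = Real.sqrt (∫ y in Ioi (0:ℝ), h y ^ 2) * Real.sqrt N2 := Real.sqrt_mul hA _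

end
end
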